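/- arXiv:2511.23153 — 5 statements merged into one kernel-verified Lean document; each statement's English description precedes it below -/
import Mathlib

section
/- Let h, Z : ℝ³ → ℝ be differentiable functions of (t,x,y) and let ψ : ℝ⁴ → ℝ be a differentiable function of (t,x,y,z). Define the mapped function ψ̃(t,x,y,ζ) = ψ(t,x,y, ζ·h(t,x,y) + Z(t,x,y)). Then for every (t,x,y,ζ) ∈ ℝ⁴ and each coordinate s ∈ {t,x,y} one has h(t,x,y)·(∂_s ψ)(t,x,y, ζh+Z) = ∂_s[h ψ̃](t,x,y,ζ) − ∂_ζ[(ζ·∂_s h + ∂_s Z)·ψ̃](t,x,y,ζ), and h(t,x,y)·(∂_z ψ)(t,x,y, ζh+Z) = ∂_ζ ψ̃(t,x,y,ζ). -/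
lemma map_key
    (h Z : ℝ × ℝ × ℝ → ℝ) (ψ : ℝ × ℝ × ℝ × ℝ → ℝ)
    (hdiff : Differentiable ℝ h) (Zdiff : Differentiable ℝ Z)
    (ψdiff : Differentiable ℝ ψ)
    (a b c : ℝ → ℝ) (va vb vc s ζ : ℝ)
    (ha : HasDerivAt a va s) (hb : HasDerivAt b vb s) (hc : HasDerivAt c vc s) :
    h (a s, b s, c s) *
      deriv (fun s' => ψ (a s', b s', c s',
        ζ * h (a s, b s, c s) + Z (a s, b s, c s))) s
    = deriv (fun s' => h (a s', b s', c s') *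
        ψ (a s', b s', c s', ζ * h (a s', b s', c s') + Z (a s', b s', c s'))) s
      - deriv (fun ζ' =>
          (ζ' * deriv (fun s' => h (a s', b s', c s')) s
            + deriv (fun s' => Z (a s', b s', c s')) s) *
          ψ (a s, b s, c s, ζ' * h (a s, b s, c s) + Z (a s, b s, c s))) ζ := by
  set P : ℝ × ℝ × ℝ := (a s, b s, c s) with hPdef
  have hP : HasDerivAt (fun s' => (a s', b s', c s')) (va, vb, vc) s :=
    HasDerivAt.prodMk ha (HasDerivAt.prodMk hb hc)
  have hh : HasDerivAt (fun s' => h (a s', b s', c s'))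
      (fderiv ℝ h P (va, vb, vc)) s :=
    (hdiff P).hasFDerivAt.comp_hasDerivAt s hP
  have hZ : HasDerivAt (fun s' => Z (a s', b s', c s'))
      (fderiv ℝ Z P (va, vb, vc)) s :=
    (Zdiff P).hasFDerivAt.comp_hasDerivAt s hP
  set H := fderiv ℝ h P (va, vb, vc) with hHdef
  set ZS := fderiv ℝ Z P (va, vb, vc) with hZSdef
  set z0 : ℝ := ζ * h P + Z P with hz0def
  set p : ℝ × ℝ × ℝ × ℝ := (a s, b s, c s, z0) with hpdef
  set ψ' := fderiv ℝ ψ p with hψ'def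
  have h1 : HasDerivAt (fun s' => ψ (a s', b s', c s', z0)) (ψ' (va, vb, vc, 0)) s :=
    (ψdiff p).hasFDerivAt.comp_hasDerivAt s
      (HasDerivAt.prodMk ha (HasDerivAt.prodMk hb (HasDerivAt.prodMk hc (hasDerivAt_const s z0))))
  have h2 : HasDerivAt
      (fun s' => ψ (a s', b s', c s', ζ * h (a s', b s', c s') + Z (a s', b s', c s')))
      (ψ' (va, vb, vc, ζ * H + ZS)) s :=
    (ψdiff p).hasFDerivAt.comp_hasDerivAt s
      (HasDerivAt.prodMk ha (HasDerivAt.prodMk hb (HasDerivAt.prodMk hc ((hh.const_mul ζ).add hZ))))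
  have h3 : HasDerivAt
      (fun s' => h (a s', b s', c s') *
        ψ (a s', b s', c s', ζ * h (a s', b s', c s') + Z (a s', b s', c s')))
      (H * ψ p + h P * ψ' (va, vb, vc, ζ * H + ZS)) s := hh.mul h2
  have hlin : HasDerivAt (fun ζ' : ℝ => ζ' * h P + Z P) (h P) ζ := by
    simpa using ((hasDerivAt_id ζ).mul_const (h P)).add_const (Z P)
  have h4 : HasDerivAt (fun ζ' => ψ (a s, b s, c s, ζ' * h P + Z P))
      (ψ' (0, 0, 0, h P)) ζ :=
    (ψdiff p).hasFDerivAt.comp_hasDerivAt ζ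
      (HasDerivAt.prodMk (hasDerivAt_const ζ (a s)) (HasDerivAt.prodMk (hasDerivAt_const ζ (b s))
        (HasDerivAt.prodMk (hasDerivAt_const ζ (c s)) hlin)))
  have h5 : HasDerivAt (fun ζ' : ℝ => ζ' * H + ZS) H ζ := by
    simpa using ((hasDerivAt_id ζ).mul_const H).add_const ZS
  have h6 : HasDerivAt
      (fun ζ' => (ζ' * H + ZS) * ψ (a s, b s, c s, ζ' * h P + Z P))
      (H * ψ p + (ζ * H + ZS) * ψ' (0, 0, 0, h P)) ζ := h5.mul h4
  rw [hh.deriv, hZ.deriv, h1.deriv, h3.deriv, h6.deriv]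
  have lin1 : ψ' (va, vb, vc, ζ * H + ZS)
      = ψ' (va, vb, vc, 0) + (ζ * H + ZS) * ψ' (0, 0, 0, 1) := by
    have : (va, vb, vc, ζ * H + ZS)
        = (va, vb, vc, (0:ℝ)) + (ζ * H + ZS) • ((0:ℝ), (0:ℝ), (0:ℝ), (1:ℝ)) := by
      simp [Prod.ext_iff]
    rw [this, map_add, map_smul, smul_eq_mul]
  have lin2 : ψ' (0, 0, 0, h P) = h P * ψ' (0, 0, 0, 1) := by
    have : ((0:ℝ), (0:ℝ), (0:ℝ), h P) = h P • ((0:ℝ), (0:ℝ), (0:ℝ), (1:ℝ)) := by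
      simp [Prod.ext_iff]
    rw [this, map_smul, smul_eq_mul]
  rw [lin1, lin2]; ring


lemma map_vert
    (h Z : ℝ × ℝ × ℝ → ℝ) (ψ : ℝ × ℝ × ℝ × ℝ → ℝ)
    (ψdiff : Differentiable ℝ ψ) (t x y ζ : ℝ) :
    h (t, x, y) *
        deriv (fun z => ψ (t, x, y, z)) (ζ * h (t, x, y) + Z (t, x, y))
      = deriv (fun ζ' => ψ (t, x, y, ζ' * h (t, x, y) + Z (t, x, y))) ζ := by
  set z0 : ℝ := ζ * h (t, x, y) + Z (t, x, y) with hz0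
  set p : ℝ × ℝ × ℝ × ℝ := (t, x, y, z0) with hp
  set ψ' := fderiv ℝ ψ p with hψ'
  have hA : HasDerivAt (fun z => ψ (t, x, y, z)) (ψ' (0, 0, 0, 1)) z0 :=
    (ψdiff p).hasFDerivAt.comp_hasDerivAt z0
      (HasDerivAt.prodMk (hasDerivAt_const z0 t) (HasDerivAt.prodMk (hasDerivAt_const z0 x)
        (HasDerivAt.prodMk (hasDerivAt_const z0 y) (hasDerivAt_id z0))))
  have hlin : HasDerivAt (fun ζ' : ℝ => ζ' * h (t, x, y) + Z (t, x, y))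
      (h (t, x, y)) ζ := by
    simpa using ((hasDerivAt_id ζ).mul_const (h (t, x, y))).add_const (Z (t, x, y))
  have hB : HasDerivAt (fun ζ' => ψ (t, x, y, ζ' * h (t, x, y) + Z (t, x, y)))
      (ψ' (0, 0, 0, h (t, x, y))) ζ :=
    (ψdiff p).hasFDerivAt.comp_hasDerivAt ζ
      (HasDerivAt.prodMk (hasDerivAt_const ζ t) (HasDerivAt.prodMk (hasDerivAt_const ζ x)
        (HasDerivAt.prodMk (hasDerivAt_const ζ y) hlin)))
  rw [hA.deriv, hB.deriv]
  have : ((0:ℝ), (0:ℝ), (0:ℝ), h (t, x, y))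
      = h (t, x, y) • ((0:ℝ), (0:ℝ), (0:ℝ), (1:ℝ)) := by simp [Prod.ext_iff]
  rw [this, map_smul, smul_eq_mul]



/-- The differential transformation rules for the mapping of the
vertical coordinate `z ∈ [Z, h+Z]` to the normalized coordinate `ζ ∈ [0,1]`,
`z = ζ·h + Z`.  For a differentiable `ψ(t,x,y,z)` and its mapped counterpart
`ψ̃(t,x,y,ζ) = ψ(t,x,y, ζh+Z)`, one has for each `s ∈ {t,x,y}`:
`h·∂_s ψ = ∂_s(h ψ̃) − ∂_ζ[((ζ·∂_s h + ∂_s Z)·ψ̃)]` and `h·∂_z ψ = ∂_ζ ψ̃`. -/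
theorem mapping_differential_rules
    (h Z : ℝ × ℝ × ℝ → ℝ) (ψ : ℝ × ℝ × ℝ × ℝ → ℝ)
    (hdiff : Differentiable ℝ h) (Zdiff : Differentiable ℝ Z)
    (ψdiff : Differentiable ℝ ψ) :
    ∀ t x y ζ : ℝ,
      -- s = t
      (h (t, x, y) *
          deriv (fun t' => ψ (t', x, y, ζ * h (t, x, y) + Z (t, x, y))) t
        = deriv
            (fun t' => h (t', x, y) *
              ψ (t', x, y, ζ * h (t', x, y) + Z (t', x, y))) t
          - deriv
              (fun ζ' =>
                (ζ' * deriv (fun t' => h (t', x, y)) t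
                    + deriv (fun t' => Z (t', x, y)) t) *
                  ψ (t, x, y, ζ' * h (t, x, y) + Z (t, x, y))) ζ)
      ∧
      -- s = x
      (h (t, x, y) *
          deriv (fun x' => ψ (t, x', y, ζ * h (t, x, y) + Z (t, x, y))) x
        = deriv
            (fun x' => h (t, x', y) *
              ψ (t, x', y, ζ * h (t, x', y) + Z (t, x', y))) x
          - deriv
              (fun ζ' =>
                (ζ' * deriv (fun x' => h (t, x', y)) x
                    + deriv (fun x' => Z (t, x', y)) x) *
                  ψ (t, x, y, ζ' * h (t, x, y) + Z (t, x, y))) ζ)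
      ∧
      -- s = y
      (h (t, x, y) *
          deriv (fun y' => ψ (t, x, y', ζ * h (t, x, y) + Z (t, x, y))) y
        = deriv
            (fun y' => h (t, x, y') *
              ψ (t, x, y', ζ * h (t, x, y') + Z (t, x, y'))) y
          - deriv
              (fun ζ' =>
                (ζ' * deriv (fun y' => h (t, x, y')) y
                    + deriv (fun y' => Z (t, x, y')) y) *
                  ψ (t, x, y, ζ' * h (t, x, y) + Z (t, x, y))) ζ)
      ∧
      -- vertical rule
      (h (t, x, y) *
          deriv (fun z => ψ (t, x, y, z)) (ζ * h (t, x, y) + Z (t, x, y))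
        = deriv (fun ζ' => ψ (t, x, y, ζ' * h (t, x, y) + Z (t, x, y))) ζ) := by
  intro t x y ζ
  refine ⟨?_, ?_, ?_, map_vert h Z ψ ψdiff t x y ζ⟩
  · exact map_key h Z ψ hdiff Zdiff ψdiff (fun t' => t') (fun _ => x) (fun _ => y)
      1 0 0 t ζ (hasDerivAt_id t) (hasDerivAt_const t x) (hasDerivAt_const t y)
  · exact map_key h Z ψ hdiff Zdiff ψdiff (fun _ => t) (fun x' => x') (fun _ => y)
      0 1 0 x ζ (hasDerivAt_const x t) (hasDerivAt_id x) (hasDerivAt_const x y)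
  · exact map_key h Z ψ hdiff Zdiff ψdiff (fun _ => t) (fun _ => x) (fun y' => y')
      0 0 1 y ζ (hasDerivAt_const y t) (hasDerivAt_const y x) (hasDerivAt_id y)
end

section
/- Let h, Z : ℝ³ → ℝ be continuously differentiable functions of (t,x,y) with h > 0 everywhere, and let u, v, w : ℝ⁴ → ℝ be continuously differentiable functions of (t,x,y,z) satisfying ∂_x u + ∂_y v + ∂_z w = 0 everywhere. Assume the kinematic free-surface boundary conditions: at z = h+Z, ∂_t(h+Z) + u·∂_x(h+Z) + v·∂_y(h+Z) = w, and at z = Z, ∂_t Z + u·∂_x Z + v·∂_y Z = w (with u, v, w evaluated at the corresponding z). Then for all (t,x,y): ∂_t h + ∂_x( ∫_{Z}^{h+Z} u(t,x,y,z) dz ) + ∂_y( ∫_{Z}^{h+Z} v(t,x,y,z) dz ) = 0. -/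
open intervalIntegral

open MeasureTheory Asymptotics Metric Set


/-- The map `(s,c) ↦ ∫_{c₀}^{c} g(s,z) dz` is differentiable at `(s₀,c₀)` with
derivative `g(s₀,c₀) · dc`. -/
lemma corner_hasFDerivAt (g : ℝ × ℝ → ℝ) (hg : Continuous g) (s₀ c₀ : ℝ) :
    HasFDerivAt (fun p : ℝ × ℝ => ∫ z in c₀..p.2, g (p.1, z))
      (g (s₀, c₀) • ContinuousLinearMap.snd ℝ ℝ ℝ) (s₀, c₀) := by
  rw [hasFDerivAt_iff_isLittleO_nhds_zero]
  rw [Asymptotics.isLittleO_iff]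
  intro ε hε
  obtain ⟨δ, hδpos, hδ⟩ := Metric.continuousAt_iff.mp (hg.continuousAt (x := ((s₀, c₀) : ℝ × ℝ))) ε hε
  filter_upwards [Metric.ball_mem_nhds (0 : ℝ × ℝ) hδpos] with q hq
  rw [mem_ball_zero_iff] at hq
  have h2 : |q.2| ≤ ‖q‖ := norm_snd_le q
  have h1 : |q.1| ≤ ‖q‖ := norm_fst_le q
  have hint : IntervalIntegrable (fun z => g (s₀ + q.1, z)) volume c₀ (c₀ + q.2) :=
    (hg.comp (continuous_const.prodMk continuous_id)).intervalIntegrable _ _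
  have hconst : g (s₀, c₀) * q.2 = ∫ z in c₀..(c₀ + q.2), g (s₀, c₀) := by
    rw [intervalIntegral.integral_const, smul_eq_mul]; ring
  simp only [Prod.fst_add, Prod.snd_add, intervalIntegral.integral_same, sub_zero,
    ContinuousLinearMap.smul_apply, ContinuousLinearMap.coe_snd', smul_eq_mul]
  rw [hconst, ← intervalIntegral.integral_sub hint (intervalIntegrable_const)]
  have key : ∀ z ∈ Set.uIoc c₀ (c₀ + q.2), ‖g (s₀ + q.1, z) - g (s₀, c₀)‖ ≤ ε := by
    intro z hz
    have hz1 := hz.1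
    have hz2 := hz.2
    have hzc : |z - c₀| ≤ |q.2| := by
      rw [abs_le]
      constructor
      · have : c₀ - |q.2| ≤ min c₀ (c₀ + q.2) :=
          le_min (by linarith [abs_nonneg q.2]) (by linarith [neg_abs_le q.2])
        linarith
      · have : max c₀ (c₀ + q.2) ≤ c₀ + |q.2| :=
          max_le (by linarith [abs_nonneg q.2]) (by linarith [le_abs_self q.2])
        linarith
    have hd : dist ((s₀ + q.1, z) : ℝ × ℝ) (s₀, c₀) < δ := by
      rw [Prod.dist_eq]
      apply max_lt
      · simpa [Real.dist_eq] using lt_of_le_of_lt h1 hq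
      · simp only [Real.dist_eq]
        exact lt_of_le_of_lt (le_trans hzc h2) hq
    have := hδ hd
    rw [Real.dist_eq] at this
    exact le_of_lt this
  calc ‖∫ z in c₀..(c₀ + q.2), (g (s₀ + q.1, z) - g (s₀, c₀))‖
      ≤ ε * |(c₀ + q.2) - c₀| := intervalIntegral.norm_integral_le_of_norm_le_const key
    _ ≤ ε * ‖q‖ := by
        rw [add_sub_cancel_left]
        exact mul_le_mul_of_nonneg_left h2 (le_of_lt hε)

/-- Partial derivative of a `C¹` function of two variables in the first variable. -/
lemma hasDerivAt_param (f : ℝ × ℝ → ℝ) (hf : ContDiff ℝ 1 f) (s z : ℝ) :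
    HasDerivAt (fun s' => f (s', z)) (fderiv ℝ f (s, z) (1, 0)) s := by
  have h1 : HasDerivAt (fun s' : ℝ => ((s', z) : ℝ × ℝ)) (1, 0) s :=
    (hasDerivAt_id s).prodMk (hasDerivAt_const s z)
  exact ((hf.differentiable one_ne_zero (s, z)).hasFDerivAt).comp_hasDerivAt s h1

lemma cont_param (f : ℝ × ℝ → ℝ) (hf : ContDiff ℝ 1 f) :
    Continuous (fun p : ℝ × ℝ => fderiv ℝ f p (1, 0)) :=
  (hf.continuous_fderiv one_ne_zero).clm_apply continuous_const

/-- Differentiation under the integral sign with fixed endpoints. -/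
lemma param_integral_hasDerivAt (f : ℝ × ℝ → ℝ) (hf : ContDiff ℝ 1 f) (a b s₀ : ℝ) :
    HasDerivAt (fun s => ∫ z in a..b, f (s, z))
      (∫ z in a..b, fderiv ℝ f (s₀, z) (1, 0)) s₀ := by
  have hcontf : ∀ s : ℝ, Continuous (fun z => f (s, z)) := fun s =>
    hf.continuous.comp (continuous_const.prodMk continuous_id)
  have hφ : Continuous (fun p : ℝ × ℝ => fderiv ℝ f p (1, 0)) := cont_param f hf
  have hK : IsCompact ((Metric.closedBall s₀ 1) ×ˢ Set.uIcc a b) :=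
    (isCompact_closedBall s₀ 1).prod isCompact_uIcc
  obtain ⟨C, hC⟩ := hK.exists_bound_of_continuousOn hφ.continuousOn
  have main := intervalIntegral.hasDerivAt_integral_of_dominated_loc_of_deriv_le
    (𝕜 := ℝ) (μ := volume) (F := fun s z => f (s, z))
    (F' := fun s z => fderiv ℝ f (s, z) (1, 0)) (x₀ := s₀) (bound := fun _ => C)
    (a := a) (b := b) (s := Metric.ball s₀ 1) (Metric.ball_mem_nhds s₀ one_pos)
    (Filter.Eventually.of_forall fun s => (hcontf s).aestronglyMeasurable)
    ((hcontf s₀).intervalIntegrable a b)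
    ((hφ.comp (continuous_const.prodMk continuous_id)).aestronglyMeasurable)
    (Filter.Eventually.of_forall fun z hz s hs => by
      exact hC _ ⟨Metric.ball_subset_closedBall hs, Set.uIoc_subset_uIcc hz⟩)
    (intervalIntegrable_const)
    (Filter.Eventually.of_forall fun z hz s hs => hasDerivAt_param f hf s z)
  exact main.2

/-- Leibniz rule: differentiation of an interval integral with moving endpoints. -/
lemma leibniz_hasDerivAt (f : ℝ × ℝ → ℝ) (hf : ContDiff ℝ 1 f) {a b : ℝ → ℝ}
    {a' b' s₀ : ℝ} (ha : HasDerivAt a a' s₀) (hb : HasDerivAt b b' s₀) :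
    HasDerivAt (fun s => ∫ z in a s..b s, f (s, z))
      (f (s₀, b s₀) * b' - f (s₀, a s₀) * a'
        + ∫ z in a s₀..b s₀, fderiv ℝ f (s₀, z) (1, 0)) s₀ := by
  have hcontf : ∀ s : ℝ, Continuous (fun z => f (s, z)) := fun s =>
    hf.continuous.comp (continuous_const.prodMk continuous_id)
  have hint : ∀ s c d : ℝ, IntervalIntegrable (fun z => f (s, z)) volume c d := fun s c d =>
    (hcontf s).intervalIntegrable c d
  have split : ∀ s : ℝ, ∫ z in a s..b s, f (s, z)
      = ((∫ z in a s₀..b s₀, f (s, z)) + (∫ z in b s₀..b s, f (s, z)))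
        - (∫ z in a s₀..a s, f (s, z)) := by
    intro s
    have e1 : (∫ z in a s₀..b s₀, f (s, z)) + (∫ z in b s₀..b s, f (s, z))
        = ∫ z in a s₀..b s, f (s, z) :=
      intervalIntegral.integral_add_adjacent_intervals (hint s _ _) (hint s _ _)
    have e2 : (∫ z in a s₀..a s, f (s, z)) + (∫ z in a s..b s, f (s, z))
        = ∫ z in a s₀..b s, f (s, z) :=
      intervalIntegral.integral_add_adjacent_intervals (hint s _ _) (hint s _ _)
    linarith
  have hA : HasDerivAt (fun s => ∫ z in a s₀..b s₀, f (s, z))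
      (∫ z in a s₀..b s₀, fderiv ℝ f (s₀, z) (1, 0)) s₀ :=
    param_integral_hasDerivAt f hf _ _ s₀
  have hB : HasDerivAt (fun s => ∫ z in b s₀..b s, f (s, z)) (f (s₀, b s₀) * b') s₀ := by
    have hcomp := (corner_hasFDerivAt f hf.continuous s₀ (b s₀)).comp_hasDerivAt s₀
      ((hasDerivAt_id s₀).prodMk hb)
    simpa [Function.comp_def] using hcomp
  have hCt : HasDerivAt (fun s => ∫ z in a s₀..a s, f (s, z)) (f (s₀, a s₀) * a') s₀ := by
    have hcomp := (corner_hasFDerivAt f hf.continuous s₀ (a s₀)).comp_hasDerivAt s₀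
      ((hasDerivAt_id s₀).prodMk ha)
    simpa [Function.comp_def] using hcomp
  have := (hA.add hB).sub hCt
  have heq : HasDerivAt (fun s => ∫ z in a s..b s, f (s, z))
      (((∫ z in a s₀..b s₀, fderiv ℝ f (s₀, z) (1, 0)) + f (s₀, b s₀) * b')
        - f (s₀, a s₀) * a') s₀ := by
    apply this.congr_of_eventuallyEq
    exact Filter.Eventually.of_forall fun s => (split s)
  convert heq using 1
  ring

/-- The shallow-water mass balance.  For a divergence-free
velocity field `(u,v,w)` satisfying the kinematic free-surface boundary
conditions at the surface `z = h+Z` and the bottom `z = Z`, one has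
`∂_t h + ∂_x(∫_Z^{h+Z} u dz) + ∂_y(∫_Z^{h+Z} v dz) = 0`. -/
theorem shallow_water_mass_balance
    (h Z : ℝ × ℝ × ℝ → ℝ) (u v w : ℝ × ℝ × ℝ × ℝ → ℝ)
    (hC1 : ContDiff ℝ 1 h) (ZC1 : ContDiff ℝ 1 Z)
    (hpos : ∀ p : ℝ × ℝ × ℝ, 0 < h p)
    (uC1 : ContDiff ℝ 1 u) (vC1 : ContDiff ℝ 1 v) (wC1 : ContDiff ℝ 1 w)
    (incomp : ∀ t x y z : ℝ,
      deriv (fun x' => u (t, x', y, z)) x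
        + deriv (fun y' => v (t, x, y', z)) y
        + deriv (fun z' => w (t, x, y, z')) z = 0)
    (bc_surface : ∀ t x y : ℝ,
      deriv (fun t' => h (t', x, y) + Z (t', x, y)) t
        + u (t, x, y, h (t, x, y) + Z (t, x, y)) *
            deriv (fun x' => h (t, x', y) + Z (t, x', y)) x
        + v (t, x, y, h (t, x, y) + Z (t, x, y)) *
            deriv (fun y' => h (t, x, y') + Z (t, x, y')) y
        = w (t, x, y, h (t, x, y) + Z (t, x, y)))
    (bc_bottom : ∀ t x y : ℝ,
      deriv (fun t' => Z (t', x, y)) t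
        + u (t, x, y, Z (t, x, y)) * deriv (fun x' => Z (t, x', y)) x
        + v (t, x, y, Z (t, x, y)) * deriv (fun y' => Z (t, x, y')) y
        = w (t, x, y, Z (t, x, y))) :
    ∀ t x y : ℝ,
      deriv (fun t' => h (t', x, y)) t
        + deriv
            (fun x' =>
              ∫ z in Z (t, x', y)..(h (t, x', y) + Z (t, x', y)),
                u (t, x', y, z)) x
        + deriv
            (fun y' =>
              ∫ z in Z (t, x, y')..(h (t, x, y') + Z (t, x, y')),
                v (t, x, y', z)) y
        = 0 := by
  intro t x y
  -- coordinate embeddings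
  have embx3 : ContDiff ℝ 1 (fun x' : ℝ => ((t, x', y) : ℝ × ℝ × ℝ)) :=
    contDiff_const.prodMk (contDiff_id.prodMk contDiff_const)
  have emby3 : ContDiff ℝ 1 (fun y' : ℝ => ((t, x, y') : ℝ × ℝ × ℝ)) :=
    contDiff_const.prodMk (contDiff_const.prodMk contDiff_id)
  have embt3 : ContDiff ℝ 1 (fun t' : ℝ => ((t', x, y) : ℝ × ℝ × ℝ)) :=
    contDiff_id.prodMk (contDiff_const.prodMk contDiff_const)
  have fXC1 : ContDiff ℝ 1 (fun p : ℝ × ℝ => u (t, p.1, y, p.2)) :=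
    uC1.comp (contDiff_const.prodMk (contDiff_fst.prodMk (contDiff_const.prodMk contDiff_snd)))
  have fYC1 : ContDiff ℝ 1 (fun p : ℝ × ℝ => v (t, x, p.1, p.2)) :=
    vC1.comp (contDiff_const.prodMk (contDiff_const.prodMk (contDiff_fst.prodMk contDiff_snd)))
  -- derivatives of Z and h+Z in x and y, and of h, Z in t
  have hZx : HasDerivAt (fun x' => Z (t, x', y)) (deriv (fun x' => Z (t, x', y)) x) x := by
    apply DifferentiableAt.hasDerivAt
    exact (ZC1.comp embx3).differentiable one_ne_zero x
  have hHx : HasDerivAt (fun x' => h (t, x', y) + Z (t, x', y))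
      (deriv (fun x' => h (t, x', y) + Z (t, x', y)) x) x := by
    apply DifferentiableAt.hasDerivAt
    exact ((hC1.comp embx3).add (ZC1.comp embx3)).differentiable one_ne_zero x
  have hZy : HasDerivAt (fun y' => Z (t, x, y')) (deriv (fun y' => Z (t, x, y')) y) y := by
    apply DifferentiableAt.hasDerivAt
    exact (ZC1.comp emby3).differentiable one_ne_zero y
  have hHy : HasDerivAt (fun y' => h (t, x, y') + Z (t, x, y'))
      (deriv (fun y' => h (t, x, y') + Z (t, x, y')) y) y := by
    apply DifferentiableAt.hasDerivAt
    exact ((hC1.comp emby3).add (ZC1.comp emby3)).differentiable one_ne_zero y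
  have hht : HasDerivAt (fun t' => h (t', x, y)) (deriv (fun t' => h (t', x, y)) t) t := by
    apply DifferentiableAt.hasDerivAt
    exact (hC1.comp embt3).differentiable one_ne_zero t
  have hZt : HasDerivAt (fun t' => Z (t', x, y)) (deriv (fun t' => Z (t', x, y)) t) t := by
    apply DifferentiableAt.hasDerivAt
    exact (ZC1.comp embt3).differentiable one_ne_zero t
  have hsum : deriv (fun t' => h (t', x, y) + Z (t', x, y)) t
      = deriv (fun t' => h (t', x, y)) t + deriv (fun t' => Z (t', x, y)) t :=
    (hht.add hZt).deriv
  -- Leibniz rule in x and y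
  have DX := leibniz_hasDerivAt (fun p : ℝ × ℝ => u (t, p.1, y, p.2)) fXC1 hZx hHx
  have DY := leibniz_hasDerivAt (fun p : ℝ × ℝ => v (t, x, p.1, p.2)) fYC1 hZy hHy
  have DXd : deriv
      (fun x' => ∫ z in Z (t, x', y)..(h (t, x', y) + Z (t, x', y)), u (t, x', y, z)) x
      = u (t, x, y, h (t, x, y) + Z (t, x, y)) *
          deriv (fun x' => h (t, x', y) + Z (t, x', y)) x
        - u (t, x, y, Z (t, x, y)) * deriv (fun x' => Z (t, x', y)) x
        + ∫ z in Z (t, x, y)..(h (t, x, y) + Z (t, x, y)),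
            fderiv ℝ (fun p : ℝ × ℝ => u (t, p.1, y, p.2)) (x, z) (1, 0) := DX.deriv
  have DYd : deriv
      (fun y' => ∫ z in Z (t, x, y')..(h (t, x, y') + Z (t, x, y')), v (t, x, y', z)) y
      = v (t, x, y, h (t, x, y) + Z (t, x, y)) *
          deriv (fun y' => h (t, x, y') + Z (t, x, y')) y
        - v (t, x, y, Z (t, x, y)) * deriv (fun y' => Z (t, x, y')) y
        + ∫ z in Z (t, x, y)..(h (t, x, y) + Z (t, x, y)),
            fderiv ℝ (fun p : ℝ × ℝ => v (t, x, p.1, p.2)) (y, z) (1, 0) := DY.deriv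
  -- rewrite integrands as derivs
  have hXint : (∫ z in Z (t, x, y)..(h (t, x, y) + Z (t, x, y)),
        fderiv ℝ (fun p : ℝ × ℝ => u (t, p.1, y, p.2)) (x, z) (1, 0))
      = ∫ z in Z (t, x, y)..(h (t, x, y) + Z (t, x, y)),
          deriv (fun x' => u (t, x', y, z)) x := by
    apply intervalIntegral.integral_congr
    intro z _
    have h0 : HasDerivAt (fun x' => u (t, x', y, z))
        (fderiv ℝ (fun p : ℝ × ℝ => u (t, p.1, y, p.2)) (x, z) (1, 0)) x :=
      hasDerivAt_param (fun p : ℝ × ℝ => u (t, p.1, y, p.2)) fXC1 x z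
    exact h0.deriv.symm
  have hYint : (∫ z in Z (t, x, y)..(h (t, x, y) + Z (t, x, y)),
        fderiv ℝ (fun p : ℝ × ℝ => v (t, x, p.1, p.2)) (y, z) (1, 0))
      = ∫ z in Z (t, x, y)..(h (t, x, y) + Z (t, x, y)),
          deriv (fun y' => v (t, x, y', z)) y := by
    apply intervalIntegral.integral_congr
    intro z _
    have h0 : HasDerivAt (fun y' => v (t, x, y', z))
        (fderiv ℝ (fun p : ℝ × ℝ => v (t, x, p.1, p.2)) (y, z) (1, 0)) y :=
      hasDerivAt_param (fun p : ℝ × ℝ => v (t, x, p.1, p.2)) fYC1 y z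
    exact h0.deriv.symm
  -- continuity of the partial derivative integrands
  have contU : Continuous (fun z : ℝ => deriv (fun x' => u (t, x', y, z)) x) := by
    have hcp : Continuous (fun z : ℝ =>
        fderiv ℝ (fun p : ℝ × ℝ => u (t, p.1, y, p.2)) (x, z) (1, 0)) :=
      (cont_param _ fXC1).comp (continuous_const.prodMk continuous_id)
    refine hcp.congr fun z => ?_
    have h0 : HasDerivAt (fun x' => u (t, x', y, z))
        (fderiv ℝ (fun p : ℝ × ℝ => u (t, p.1, y, p.2)) (x, z) (1, 0)) x :=
      hasDerivAt_param (fun p : ℝ × ℝ => u (t, p.1, y, p.2)) fXC1 x z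
    exact h0.deriv.symm
  have contV : Continuous (fun z : ℝ => deriv (fun y' => v (t, x, y', z)) y) := by
    have hcp : Continuous (fun z : ℝ =>
        fderiv ℝ (fun p : ℝ × ℝ => v (t, x, p.1, p.2)) (y, z) (1, 0)) :=
      (cont_param _ fYC1).comp (continuous_const.prodMk continuous_id)
    refine hcp.congr fun z => ?_
    have h0 : HasDerivAt (fun y' => v (t, x, y', z))
        (fderiv ℝ (fun p : ℝ × ℝ => v (t, x, p.1, p.2)) (y, z) (1, 0)) y :=
      hasDerivAt_param (fun p : ℝ × ℝ => v (t, x, p.1, p.2)) fYC1 y z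
    exact h0.deriv.symm
  -- fundamental theorem of calculus for w in z
  have wzC1 : ContDiff ℝ 1 (fun z' : ℝ => w (t, x, y, z')) :=
    wC1.comp (contDiff_const.prodMk (contDiff_const.prodMk (contDiff_const.prodMk contDiff_id)))
  have FTC : (∫ z in Z (t, x, y)..(h (t, x, y) + Z (t, x, y)),
        deriv (fun z' => w (t, x, y, z')) z)
      = w (t, x, y, h (t, x, y) + Z (t, x, y)) - w (t, x, y, Z (t, x, y)) := by
    apply intervalIntegral.integral_deriv_eq_sub
    · exact fun z _ => (wzC1.differentiable one_ne_zero).differentiableAt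
    · exact (wzC1.continuous_deriv le_rfl).intervalIntegrable _ _
  -- combine incompressibility
  have hUV : (∫ z in Z (t, x, y)..(h (t, x, y) + Z (t, x, y)),
        deriv (fun x' => u (t, x', y, z)) x)
      + (∫ z in Z (t, x, y)..(h (t, x, y) + Z (t, x, y)),
          deriv (fun y' => v (t, x, y', z)) y)
      = w (t, x, y, Z (t, x, y)) - w (t, x, y, h (t, x, y) + Z (t, x, y)) := by
    have e1 := (intervalIntegral.integral_add
      (contU.intervalIntegrable (μ := MeasureTheory.volume) (Z (t, x, y)) (h (t, x, y) + Z (t, x, y)))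
      (contV.intervalIntegrable (μ := MeasureTheory.volume) (Z (t, x, y)) (h (t, x, y) + Z (t, x, y)))).symm
    rw [e1]
    have e2 : (∫ z in Z (t, x, y)..(h (t, x, y) + Z (t, x, y)),
          (deriv (fun x' => u (t, x', y, z)) x + deriv (fun y' => v (t, x, y', z)) y))
        = ∫ z in Z (t, x, y)..(h (t, x, y) + Z (t, x, y)),
            (-(deriv (fun z' => w (t, x, y, z')) z)) := by
      apply intervalIntegral.integral_congr
      intro z _
      have := incomp t x y z
      dsimp only
      linarith
    rw [e2, intervalIntegral.integral_neg, FTC]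
    ring
  rw [DXd, DYd, hXint, hYint]
  have hbs := bc_surface t x y
  have hbb := bc_bottom t x y
  linarith [hsum, hbs, hbb, hUV]
end

section
/- Let h, Z : ℝ³ → ℝ be continuously differentiable functions of (t,x,y) with h > 0 everywhere, and let a, b, c : ℝ⁴ → ℝ be continuously differentiable functions of (t,x,y,z) satisfying the divergence-free condition ∂_x a + ∂_y b + ∂_z c = 0 everywhere. Assume the zero-outward-normal magnetic boundary conditions: at z = h+Z, c = a·∂_x(h+Z) + b·∂_y(h+Z), and at z = Z, c = a·∂_x Z + b·∂_y Z (with a, b, c evaluated at the corresponding z). Then for all (t,x,y): ∂_x( ∫_{Z}^{h+Z} a(t,x,y,z) dz ) + ∂_y( ∫_{Z}^{h+Z} b(t,x,y,z) dz ) = 0. -/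
open intervalIntegral MeasureTheory Set Metric Filter

/-- Corner derivative: joint derivative of `(x, w) ↦ ∫ z in v0..w, g (x, z)`
at the point `(x0, v0)`. -/
lemma hasFDerivAt_corner (g : ℝ × ℝ → ℝ) (hg : Continuous g) (x0 v0 : ℝ) :
    HasFDerivAt (fun p : ℝ × ℝ => ∫ z in v0..p.2, g (p.1, z))
      (g (x0, v0) • (ContinuousLinearMap.snd ℝ ℝ ℝ)) (x0, v0) := by
  rw [hasFDerivAt_iff_isLittleO_nhds_zero]
  rw [Asymptotics.isLittleO_iff]
  intro ε hε
  obtain ⟨δ, hδ, hcont⟩ := Metric.continuousAt_iff.mp hg.continuousAt ε hε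
  filter_upwards [Metric.ball_mem_nhds (0 : ℝ × ℝ) hδ] with p hp
  have hint1 : IntervalIntegrable (fun z => g (x0 + p.1, z)) volume v0 (v0 + p.2) :=
    (hg.comp (continuous_const.prodMk continuous_id)).intervalIntegrable _ _
  have key : (∫ z in v0..(v0 + p.2), g (x0 + p.1, z))
      - g (x0, v0) * p.2
      = ∫ z in v0..(v0 + p.2), (g (x0 + p.1, z) - g (x0, v0)) := by
    rw [intervalIntegral.integral_sub hint1 (intervalIntegrable_const)]
    rw [intervalIntegral.integral_const]
    simp [smul_eq_mul]
    ring
  simp only [ContinuousLinearMap.coe_smul', Pi.smul_apply, ContinuousLinearMap.coe_snd',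
    smul_eq_mul]
  have hb : ∀ z ∈ Set.uIoc v0 (v0 + p.2), ‖g (x0 + p.1, z) - g (x0, v0)‖ ≤ ε := by
    intro z hz
    have hz' : |z - v0| ≤ |p.2| := by
      rcases hz with ⟨h1, h2⟩
      rw [abs_le]
      rcases le_or_gt 0 p.2 with hc | hc
      · rw [min_eq_left (by linarith)] at h1
        rw [max_eq_right (by linarith)] at h2
        constructor
        · linarith [abs_nonneg p.2]
        · linarith [le_abs_self p.2]
      · rw [min_eq_right (by linarith : v0 + p.2 ≤ v0)] at h1
        rw [max_eq_left (by linarith : v0 + p.2 ≤ v0)] at h2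
        have habs : |p.2| = -p.2 := abs_of_neg hc
        constructor
        · rw [habs]; linarith
        · linarith [abs_nonneg p.2]
    apply le_of_lt
    apply hcont
    rw [Prod.dist_eq]
    simp only [Real.dist_eq]
    have hp1 : |p.1| < δ := lt_of_le_of_lt (by
      have := norm_fst_le p
      simpa [Real.norm_eq_abs] using this) (by simpa using hp)
    have hp2 : |p.2| < δ := lt_of_le_of_lt (by
      have := norm_snd_le p
      simpa [Real.norm_eq_abs] using this) (by simpa using hp)
    simp only [add_sub_cancel_left]
    exact max_lt hp1 (lt_of_le_of_lt hz' hp2)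
  calc ‖(∫ z in v0..(v0 + p.2), g (x0 + p.1, z)) - (∫ z in v0..v0, g (x0, z))
      - g (x0, v0) * p.2‖
      = ‖∫ z in v0..(v0 + p.2), (g (x0 + p.1, z) - g (x0, v0))‖ := by
        rw [intervalIntegral.integral_same]; rw [sub_zero, key]
    _ ≤ ε * |v0 + p.2 - v0| := intervalIntegral.norm_integral_le_of_norm_le_const hb
    _ ≤ ε * ‖p‖ := by
        rw [add_sub_cancel_left]
        have := norm_snd_le p
        have h2 : |p.2| ≤ ‖p‖ := by simpa [Real.norm_eq_abs] using this
        nlinarith [norm_nonneg p]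

/-- Pointwise derivative in the first variable of a `C¹` function. -/
lemma hasDerivAt_fst (g : ℝ × ℝ → ℝ) (hg : ContDiff ℝ 1 g) (x z : ℝ) :
    HasDerivAt (fun x' => g (x', z)) ((fderiv ℝ g (x, z)) (1, 0)) x := by
  have h1 : HasDerivAt (fun x' => (x', z)) ((1 : ℝ), (0 : ℝ)) x :=
    (hasDerivAt_id x).prodMk (hasDerivAt_const x z)
  exact ((hg.differentiable one_ne_zero (x, z)).hasFDerivAt).comp_hasDerivAt x h1

lemma continuous_pderiv_fst (g : ℝ × ℝ → ℝ) (hg : ContDiff ℝ 1 g) :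
    Continuous (fun p : ℝ × ℝ => (fderiv ℝ g p) (1, 0)) :=
  (hg.continuous_fderiv one_ne_zero).clm_apply continuous_const

/-- Differentiation under the integral sign with fixed endpoints. -/
lemma hasDerivAt_param_s3 (g : ℝ × ℝ → ℝ) (hg : ContDiff ℝ 1 g) (u0 v0 x0 : ℝ) :
    HasDerivAt (fun x => ∫ z in u0..v0, g (x, z))
      (∫ z in u0..v0, deriv (fun x' => g (x', z)) x0) x0 := by
  have hderiv_eq : ∀ x z : ℝ, deriv (fun x' => g (x', z)) x = (fderiv ℝ g (x, z)) (1, 0) :=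
    fun x z => (hasDerivAt_fst g hg x z).deriv
  -- compact bound
  obtain ⟨C, hC⟩ := (isCompact_closedBall x0 1 |>.prod isCompact_uIcc).exists_bound_of_continuousOn
    ((continuous_pderiv_fst g hg).continuousOn)
  have main := intervalIntegral.hasDerivAt_integral_of_dominated_loc_of_deriv_le
    (F := fun x z => g (x, z)) (F' := fun x z => (fderiv ℝ g (x, z)) (1, 0))
    (x₀ := x0) (a := u0) (b := v0) (bound := fun _ => C) (μ := volume)
    (Metric.ball_mem_nhds x0 one_pos)
    (Filter.Eventually.of_forall fun x =>
      ((hg.continuous.comp (continuous_const.prodMk continuous_id)).aestronglyMeasurable))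
    ((hg.continuous.comp (continuous_const.prodMk continuous_id)).intervalIntegrable _ _)
    ((continuous_pderiv_fst g hg |>.comp (continuous_const.prodMk continuous_id)).aestronglyMeasurable)
    (Filter.Eventually.of_forall fun z hz x hx => by
      exact hC ((x, z)) ⟨ball_subset_closedBall hx, uIoc_subset_uIcc hz⟩)
    (intervalIntegrable_const)
    (Filter.Eventually.of_forall fun z hz x hx => hasDerivAt_fst g hg x z)
  have h2 := main.2
  have : (∫ z in u0..v0, (fderiv ℝ g (x0, z)) (1, 0))
      = ∫ z in u0..v0, deriv (fun x' => g (x', z)) x0 := by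
    exact intervalIntegral.integral_congr fun z _ => (hderiv_eq x0 z).symm ▸ rfl
  rwa [this] at h2

/-- Full Leibniz rule for an interval integral with variable endpoints and
parameter-dependent integrand. -/
lemma leibniz_rule (g : ℝ × ℝ → ℝ) (hg : ContDiff ℝ 1 g) {u v : ℝ → ℝ} {u' v' x0 : ℝ}
    (hu : HasDerivAt u u' x0) (hv : HasDerivAt v v' x0) :
    HasDerivAt (fun x => ∫ z in u x..v x, g (x, z))
      ((∫ z in u x0..v x0, deriv (fun x' => g (x', z)) x0)
        + g (x0, v x0) * v' - g (x0, u x0) * u') x0 := by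
  set u0 := u x0
  set v0 := v x0
  have hgc : Continuous g := hg.continuous
  have hint : ∀ (x α β : ℝ), IntervalIntegrable (fun z => g (x, z)) volume α β :=
    fun x α β => (hgc.comp (continuous_const.prodMk continuous_id)).intervalIntegrable _ _
  have hsplit : ∀ x : ℝ, (∫ z in u x..v x, g (x, z))
      = (∫ z in u0..v0, g (x, z)) + (∫ z in v0..v x, g (x, z))
        - (∫ z in u0..u x, g (x, z)) := by
    intro x
    have h1 : (∫ z in u x..u0, g (x, z)) + (∫ z in u0..v0, g (x, z))
        = ∫ z in u x..v0, g (x, z) :=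
      intervalIntegral.integral_add_adjacent_intervals (hint x _ _) (hint x _ _)
    have h2 : (∫ z in u x..v0, g (x, z)) + (∫ z in v0..v x, g (x, z))
        = ∫ z in u x..v x, g (x, z) :=
      intervalIntegral.integral_add_adjacent_intervals (hint x _ _) (hint x _ _)
    have h3 : (∫ z in u x..u0, g (x, z)) = -(∫ z in u0..u x, g (x, z)) :=
      intervalIntegral.integral_symm _ _
    linarith
  have D1 : HasDerivAt (fun x => ∫ z in u0..v0, g (x, z))
      (∫ z in u0..v0, deriv (fun x' => g (x', z)) x0) x0 := hasDerivAt_param_s3 g hg u0 v0 x0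
  have D2 : HasDerivAt (fun x => ∫ z in v0..v x, g (x, z)) (g (x0, v0) * v') x0 := by
    have hcorner := hasFDerivAt_corner g hgc x0 v0
    have hinner : HasDerivAt (fun x => ((x, v x) : ℝ × ℝ)) ((1 : ℝ), v') x0 :=
      (hasDerivAt_id x0).prodMk hv
    have := hcorner.comp_hasDerivAt x0 hinner
    exact this
  have D3 : HasDerivAt (fun x => ∫ z in u0..u x, g (x, z)) (g (x0, u0) * u') x0 := by
    have hcorner := hasFDerivAt_corner g hgc x0 u0
    have hinner : HasDerivAt (fun x => ((x, u x) : ℝ × ℝ)) ((1 : ℝ), u') x0 :=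
      (hasDerivAt_id x0).prodMk hu
    have := hcorner.comp_hasDerivAt x0 hinner
    exact this
  have := (D1.add D2).sub D3
  exact this.congr_of_eventuallyEq (Filter.Eventually.of_forall hsplit)

/-- The depth-averaged divergence-free condition of the magnetic
field.  For a divergence-free magnetic field `(a,b,c)` with zero outward
normal component at the surface `z = h+Z` and the bottom `z = Z`, one has
`∂_x(∫_Z^{h+Z} a dz) + ∂_y(∫_Z^{h+Z} b dz) = 0`. -/
theorem depth_averaged_divergence_free
    (h Z : ℝ × ℝ × ℝ → ℝ) (a b c : ℝ × ℝ × ℝ × ℝ → ℝ)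
    (hC1 : ContDiff ℝ 1 h) (ZC1 : ContDiff ℝ 1 Z)
    (hpos : ∀ p : ℝ × ℝ × ℝ, 0 < h p)
    (aC1 : ContDiff ℝ 1 a) (bC1 : ContDiff ℝ 1 b) (cC1 : ContDiff ℝ 1 c)
    (divfree : ∀ t x y z : ℝ,
      deriv (fun x' => a (t, x', y, z)) x
        + deriv (fun y' => b (t, x, y', z)) y
        + deriv (fun z' => c (t, x, y, z')) z = 0)
    (bc_surface : ∀ t x y : ℝ,
      c (t, x, y, h (t, x, y) + Z (t, x, y))
        = a (t, x, y, h (t, x, y) + Z (t, x, y)) *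
            deriv (fun x' => h (t, x', y) + Z (t, x', y)) x
          + b (t, x, y, h (t, x, y) + Z (t, x, y)) *
            deriv (fun y' => h (t, x, y') + Z (t, x, y')) y)
    (bc_bottom : ∀ t x y : ℝ,
      c (t, x, y, Z (t, x, y))
        = a (t, x, y, Z (t, x, y)) * deriv (fun x' => Z (t, x', y)) x
          + b (t, x, y, Z (t, x, y)) * deriv (fun y' => Z (t, x, y')) y) :
    ∀ t x y : ℝ,
      deriv
          (fun x' =>
            ∫ z in Z (t, x', y)..(h (t, x', y) + Z (t, x', y)),
              a (t, x', y, z)) x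
        + deriv
            (fun y' =>
              ∫ z in Z (t, x, y')..(h (t, x, y') + Z (t, x, y')),
                b (t, x, y', z)) y
        = 0 := by
  intro t x y
  -- differentiability of the boundary curves
  have hmapx : Differentiable ℝ (fun x' : ℝ => ((t, x', y) : ℝ × ℝ × ℝ)) :=
    (differentiable_const _).prodMk (differentiable_id.prodMk (differentiable_const _))
  have hmapy : Differentiable ℝ (fun y' : ℝ => ((t, x, y') : ℝ × ℝ × ℝ)) :=
    (differentiable_const _).prodMk ((differentiable_const _).prodMk differentiable_id)
  have hZx : DifferentiableAt ℝ (fun x' => Z (t, x', y)) x :=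
    (((ZC1.differentiable one_ne_zero).comp hmapx) x)
  have hhx : DifferentiableAt ℝ (fun x' => h (t, x', y)) x :=
    (((hC1.differentiable one_ne_zero).comp hmapx) x)
  have hvx : DifferentiableAt ℝ (fun x' => h (t, x', y) + Z (t, x', y)) x := hhx.add hZx
  have hZy : DifferentiableAt ℝ (fun y' => Z (t, x, y')) y :=
    (((ZC1.differentiable one_ne_zero).comp hmapy) y)
  have hhy : DifferentiableAt ℝ (fun y' => h (t, x, y')) y :=
    (((hC1.differentiable one_ne_zero).comp hmapy) y)
  have hvy : DifferentiableAt ℝ (fun y' => h (t, x, y') + Z (t, x, y')) y := hhy.add hZy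
  -- C¹ of the two-variable slices
  have hga : ContDiff ℝ 1 (fun p : ℝ × ℝ => a (t, p.1, y, p.2)) :=
    aC1.comp (contDiff_const.prodMk (contDiff_fst.prodMk (contDiff_const.prodMk contDiff_snd)))
  have hgb : ContDiff ℝ 1 (fun p : ℝ × ℝ => b (t, x, p.1, p.2)) :=
    bC1.comp (contDiff_const.prodMk (contDiff_const.prodMk (contDiff_fst.prodMk contDiff_snd)))
  have hgc : ContDiff ℝ 1 (fun p : ℝ × ℝ => c (t, x, y, p.1)) :=
    cC1.comp (contDiff_const.prodMk (contDiff_const.prodMk (contDiff_const.prodMk contDiff_fst)))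
  -- Leibniz in x
  have Dx : HasDerivAt
      (fun x' => ∫ z in Z (t, x', y)..(h (t, x', y) + Z (t, x', y)), a (t, x', y, z))
      ((∫ z in Z (t, x, y)..(h (t, x, y) + Z (t, x, y)),
          deriv (fun x' => a (t, x', y, z)) x)
        + a (t, x, y, h (t, x, y) + Z (t, x, y)) *
            deriv (fun x' => h (t, x', y) + Z (t, x', y)) x
        - a (t, x, y, Z (t, x, y)) * deriv (fun x' => Z (t, x', y)) x) x :=
    leibniz_rule (fun p : ℝ × ℝ => a (t, p.1, y, p.2)) hga
      hZx.hasDerivAt hvx.hasDerivAt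
  -- Leibniz in y
  have Dy : HasDerivAt
      (fun y' => ∫ z in Z (t, x, y')..(h (t, x, y') + Z (t, x, y')), b (t, x, y', z))
      ((∫ z in Z (t, x, y)..(h (t, x, y) + Z (t, x, y)),
          deriv (fun y' => b (t, x, y', z)) y)
        + b (t, x, y, h (t, x, y) + Z (t, x, y)) *
            deriv (fun y' => h (t, x, y') + Z (t, x, y')) y
        - b (t, x, y, Z (t, x, y)) * deriv (fun y' => Z (t, x, y')) y) y :=
    leibniz_rule (fun p : ℝ × ℝ => b (t, x, p.1, p.2)) hgb
      hZy.hasDerivAt hvy.hasDerivAt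
  rw [Dx.deriv, Dy.deriv]
  -- continuity of the partial derivatives as functions of z
  have conta : Continuous (fun z => deriv (fun x' => a (t, x', y, z)) x) := by
    have heq : (fun z => deriv (fun x' => a (t, x', y, z)) x)
        = fun z => (fderiv ℝ (fun p : ℝ × ℝ => a (t, p.1, y, p.2)) (x, z)) (1, 0) :=
      funext fun z => (hasDerivAt_fst _ hga x z).deriv
    rw [heq]
    exact (continuous_pderiv_fst _ hga).comp (continuous_const.prodMk continuous_id)
  have contb : Continuous (fun z => deriv (fun y' => b (t, x, y', z)) y) := by
    have heq : (fun z => deriv (fun y' => b (t, x, y', z)) y)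
        = fun z => (fderiv ℝ (fun p : ℝ × ℝ => b (t, x, p.1, p.2)) (y, z)) (1, 0) :=
      funext fun z => (hasDerivAt_fst _ hgb y z).deriv
    rw [heq]
    exact (continuous_pderiv_fst _ hgb).comp (continuous_const.prodMk continuous_id)
  have contc : Continuous (fun z => deriv (fun z' => c (t, x, y, z')) z) := by
    have heq : (fun z => deriv (fun z' => c (t, x, y, z')) z)
        = fun z => (fderiv ℝ (fun p : ℝ × ℝ => c (t, x, y, p.1)) (z, 0)) (1, 0) :=
      funext fun z => (hasDerivAt_fst _ hgc z 0).deriv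
    rw [heq]
    exact (continuous_pderiv_fst _ hgc).comp (continuous_id.prodMk continuous_const)
  -- the sum of the two interior integrals
  set B := Z (t, x, y) with hB
  set T := h (t, x, y) + Z (t, x, y) with hT
  have hIab : (∫ z in B..T, deriv (fun x' => a (t, x', y, z)) x)
      + (∫ z in B..T, deriv (fun y' => b (t, x, y', z)) y)
      = -(c (t, x, y, T) - c (t, x, y, B)) := by
    rw [← intervalIntegral.integral_add (conta.intervalIntegrable _ _)
      (contb.intervalIntegrable _ _)]
    have h1 : (∫ z in B..T, (deriv (fun x' => a (t, x', y, z)) x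
        + deriv (fun y' => b (t, x, y', z)) y))
        = ∫ z in B..T, -(deriv (fun z' => c (t, x, y, z')) z) := by
      apply intervalIntegral.integral_congr
      intro z _
      have := divfree t x y z
      dsimp only
      linarith
    rw [h1, intervalIntegral.integral_neg]
    congr 1
    exact intervalIntegral.integral_deriv_eq_sub
      (fun z _ => ((cC1.differentiable one_ne_zero).comp
        ((differentiable_const _).prodMk ((differentiable_const _).prodMk
          ((differentiable_const _).prodMk differentiable_id)))) z)
      (contc.intervalIntegrable _ _)
  have hbs := bc_surface t x y
  have hbb := bc_bottom t x y
  linarith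
end

section
/- Let h : ℝ² → ℝ be continuously differentiable with h > 0, and let u, v : ℝ³ → ℝ be continuously differentiable functions of (x,y,ζ). Define u_m(x,y) = ∫₀¹ u(x,y,ζ) dζ and v_m(x,y) = ∫₀¹ v(x,y,ζ) dζ, and define the vertical coupling hω(x,y,ζ) = −∂_x[ h(x,y)·∫₀^ζ (u(x,y,s) − u_m(x,y)) ds ] − ∂_y[ h(x,y)·∫₀^ζ (v(x,y,s) − v_m(x,y)) ds ]. Then for all (x,y,ζ): ∂_x(h u) + ∂_y(h v) + ∂_ζ(hω) = ∂_x(h u_m) + ∂_y(h v_m). -/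
open intervalIntegral Metric

section Helpers

variable {u : ℝ × ℝ × ℝ → ℝ} {h : ℝ × ℝ → ℝ}

lemma hasDerivAt_fst3 (uC1 : ContDiff ℝ 1 u) (x y s : ℝ) :
    HasDerivAt (fun x' => u (x', y, s)) (fderiv ℝ u (x, y, s) (1, 0, 0)) x := by
  have H := (uC1.differentiable one_ne_zero (x, y, s)).hasFDerivAt
  have line : HasDerivAt (fun x' : ℝ => ((x', y, s) : ℝ × ℝ × ℝ)) (1, 0, 0) x :=
    HasDerivAt.prodMk (hasDerivAt_id x) (HasDerivAt.prodMk (hasDerivAt_const x y) (hasDerivAt_const x s))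
  exact H.comp_hasDerivAt x line

lemma hasDerivAt_snd3 (uC1 : ContDiff ℝ 1 u) (x y s : ℝ) :
    HasDerivAt (fun y' => u (x, y', s)) (fderiv ℝ u (x, y, s) (0, 1, 0)) y := by
  have H := (uC1.differentiable one_ne_zero (x, y, s)).hasFDerivAt
  have line : HasDerivAt (fun y' : ℝ => ((x, y', s) : ℝ × ℝ × ℝ)) (0, 1, 0) y :=
    HasDerivAt.prodMk (hasDerivAt_const y x) (HasDerivAt.prodMk (hasDerivAt_id y) (hasDerivAt_const y s))
  exact H.comp_hasDerivAt y line

lemma hasDerivAt_fst2 (hC1 : ContDiff ℝ 1 h) (x y : ℝ) :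
    HasDerivAt (fun x' => h (x', y)) (fderiv ℝ h (x, y) (1, 0)) x := by
  have H := (hC1.differentiable one_ne_zero (x, y)).hasFDerivAt
  have line : HasDerivAt (fun x' : ℝ => ((x', y) : ℝ × ℝ)) (1, 0) x :=
    HasDerivAt.prodMk (hasDerivAt_id x) (hasDerivAt_const x y)
  exact H.comp_hasDerivAt x line

lemma hasDerivAt_snd2 (hC1 : ContDiff ℝ 1 h) (x y : ℝ) :
    HasDerivAt (fun y' => h (x, y')) (fderiv ℝ h (x, y) (0, 1)) y := by
  have H := (hC1.differentiable one_ne_zero (x, y)).hasFDerivAt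
  have line : HasDerivAt (fun y' : ℝ => ((x, y') : ℝ × ℝ)) (0, 1) y :=
    HasDerivAt.prodMk (hasDerivAt_const y x) (hasDerivAt_id y)
  exact H.comp_hasDerivAt y line

lemma cont_du1 (uC1 : ContDiff ℝ 1 u) :
    Continuous (fun p : ℝ × ℝ × ℝ => fderiv ℝ u p (1, 0, 0)) :=
  (uC1.continuous_fderiv one_ne_zero).clm_apply continuous_const

lemma cont_du2 (uC1 : ContDiff ℝ 1 u) :
    Continuous (fun p : ℝ × ℝ × ℝ => fderiv ℝ u p (0, 1, 0)) :=
  (uC1.continuous_fderiv one_ne_zero).clm_apply continuous_const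

/-- differentiation under the integral sign, in the first variable -/
lemma paramDerivX (uC1 : ContDiff ℝ 1 u) (y a b x : ℝ) :
    HasDerivAt (fun x' => ∫ s in a..b, u (x', y, s))
      (∫ s in a..b, fderiv ℝ u (x, y, s) (1, 0, 0)) x := by
  have hc : Continuous (fun p : ℝ × ℝ => fderiv ℝ u (p.1, y, p.2) (1, 0, 0)) :=
    (cont_du1 uC1).comp (by fun_prop)
  obtain ⟨C, hC⟩ := (IsCompact.exists_bound_of_continuousOn
    ((isCompact_closedBall x 1).prod isCompact_uIcc) hc.continuousOn)
  refine (intervalIntegral.hasDerivAt_integral_of_dominated_loc_of_deriv_le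
    (F := fun x' s => u (x', y, s)) (F' := fun x' s => fderiv ℝ u (x', y, s) (1, 0, 0))
    (bound := fun _ => C) (ball_mem_nhds _ one_pos) ?_ ?_ ?_ ?_ ?_ ?_).2
  · filter_upwards with x'
    exact (uC1.continuous.comp (by fun_prop)).aestronglyMeasurable
  · exact (uC1.continuous.comp (by fun_prop) : Continuous fun s => u (x, y, s)).intervalIntegrable a b
  · exact ((cont_du1 uC1).comp (by fun_prop) : Continuous fun s => fderiv ℝ u (x, y, s) (1,0,0)).aestronglyMeasurable
  · filter_upwards with t ht x' hx'
    exact hC (x', t) ⟨ball_subset_closedBall hx', Set.uIoc_subset_uIcc ht⟩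
  · exact intervalIntegrable_const
  · filter_upwards with t ht x' hx'
    exact hasDerivAt_fst3 uC1 x' y t

end Helpers

section Helpers2
variable {u : ℝ × ℝ × ℝ → ℝ}

/-- differentiation under the integral sign, in the second variable -/
lemma paramDerivY (uC1 : ContDiff ℝ 1 u) (x a b y : ℝ) :
    HasDerivAt (fun y' => ∫ s in a..b, u (x, y', s))
      (∫ s in a..b, fderiv ℝ u (x, y, s) (0, 1, 0)) y := by
  have hc : Continuous (fun p : ℝ × ℝ => fderiv ℝ u (x, p.1, p.2) (0, 1, 0)) :=
    (cont_du2 uC1).comp (by fun_prop)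
  obtain ⟨C, hC⟩ := (IsCompact.exists_bound_of_continuousOn
    ((isCompact_closedBall y 1).prod isCompact_uIcc) hc.continuousOn)
  refine (intervalIntegral.hasDerivAt_integral_of_dominated_loc_of_deriv_le
    (F := fun y' s => u (x, y', s)) (F' := fun y' s => fderiv ℝ u (x, y', s) (0, 1, 0))
    (bound := fun _ => C) (ball_mem_nhds _ one_pos) ?_ ?_ ?_ ?_ ?_ ?_).2
  · filter_upwards with y'
    exact (uC1.continuous.comp (by fun_prop)).aestronglyMeasurable
  · exact (uC1.continuous.comp (by fun_prop) : Continuous fun s => u (x, y, s)).intervalIntegrable a b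
  · exact ((cont_du2 uC1).comp (by fun_prop) : Continuous fun s => fderiv ℝ u (x, y, s) (0,1,0)).aestronglyMeasurable
  · filter_upwards with t ht y' hy'
    exact hC (y', t) ⟨ball_subset_closedBall hy', Set.uIoc_subset_uIcc ht⟩
  · exact intervalIntegrable_const
  · filter_upwards with t ht y' hy'
    exact hasDerivAt_snd3 uC1 x y' t

/-- FTC: derivative in the upper limit. -/
lemma ftc_right {f : ℝ → ℝ} (hf : Continuous f) (ζ : ℝ) :
    HasDerivAt (fun b => ∫ s in (0:ℝ)..b, f s) (f ζ) ζ :=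
  intervalIntegral.integral_hasDerivAt_right (hf.intervalIntegrable 0 ζ)
    hf.stronglyMeasurable.stronglyMeasurableAtFilter hf.continuousAt

end Helpers2

/-- The depth average of a function of `(x,y,ζ)` over `ζ ∈ [0,1]`. -/
noncomputable def depthMean (u : ℝ × ℝ × ℝ → ℝ) (x y : ℝ) : ℝ :=
  ∫ ζ in (0 : ℝ)..1, u (x, y, ζ)

/-- The velocity vertical coupling operator `hω` of the mapped shallow-flow
system:
`hω(x,y,ζ) = −∂_x[h·∫₀^ζ (u − u_m) ds] − ∂_y[h·∫₀^ζ (v − v_m) ds]`. -/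
noncomputable def hOmega (h : ℝ × ℝ → ℝ) (u v : ℝ × ℝ × ℝ → ℝ)
    (x y ζ : ℝ) : ℝ :=
  - deriv (fun x' =>
      h (x', y) * ∫ s in (0 : ℝ)..ζ, (u (x', y, s) - depthMean u x' y)) x
  - deriv (fun y' =>
      h (x, y') * ∫ s in (0 : ℝ)..ζ, (v (x, y', s) - depthMean v x y')) y

/-- Divergence relation satisfied by the velocity vertical
coupling operator:
`∂_x(hu) + ∂_y(hv) + ∂_ζ(hω) = ∂_x(h u_m) + ∂_y(h v_m)`. -/
theorem velocity_vertical_coupling_divergence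
    (h : ℝ × ℝ → ℝ) (u v : ℝ × ℝ × ℝ → ℝ)
    (hC1 : ContDiff ℝ 1 h) (hpos : ∀ p : ℝ × ℝ, 0 < h p)
    (uC1 : ContDiff ℝ 1 u) (vC1 : ContDiff ℝ 1 v) :
    ∀ x y ζ : ℝ,
      deriv (fun x' => h (x', y) * u (x', y, ζ)) x
        + deriv (fun y' => h (x, y') * v (x, y', ζ)) y
        + deriv (fun ζ' => hOmega h u v x y ζ') ζ
      = deriv (fun x' => h (x', y) * depthMean u x' y) x
        + deriv (fun y' => h (x, y') * depthMean v x y') y := by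
  intro x y ζ
  set dh1 := fderiv ℝ h (x, y) (1, 0) with hdh1
  set dh2 := fderiv ℝ h (x, y) (0, 1) with hdh2
  set du1 : ℝ → ℝ := fun s => fderiv ℝ u (x, y, s) (1, 0, 0) with hdu1
  set dv2 : ℝ → ℝ := fun s => fderiv ℝ v (x, y, s) (0, 1, 0) with hdv2
  set um := depthMean u x y with hum
  set vm := depthMean v x y with hvm
  set Mu := ∫ s in (0:ℝ)..1, du1 s with hMu
  set Mv := ∫ s in (0:ℝ)..1, dv2 s with hMv
  have cu : Continuous fun s => u (x, y, s) := uC1.continuous.comp (by fun_prop)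
  have cv : Continuous fun s => v (x, y, s) := vC1.continuous.comp (by fun_prop)
  have cdu : Continuous du1 := (cont_du1 uC1).comp (by fun_prop)
  have cdv : Continuous dv2 := (cont_du2 vC1).comp (by fun_prop)
  -- x-derivative of the first bracket in hOmega, for every ζ'
  have hA : ∀ ζ' : ℝ,
      HasDerivAt (fun x' => h (x', y) * ∫ s in (0:ℝ)..ζ', (u (x', y, s) - depthMean u x' y))
        (dh1 * ((∫ s in (0:ℝ)..ζ', u (x, y, s)) - ζ' * um)
          + h (x, y) * ((∫ s in (0:ℝ)..ζ', du1 s) - ζ' * Mu)) x := by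
    intro ζ'
    have hfun : (fun x' => h (x', y) * ∫ s in (0:ℝ)..ζ', (u (x', y, s) - depthMean u x' y))
        = fun x' => h (x', y) * ((∫ s in (0:ℝ)..ζ', u (x', y, s)) - ζ' * depthMean u x' y) := by
      funext x'
      rw [intervalIntegral.integral_sub
          (Continuous.intervalIntegrable (by exact uC1.continuous.comp (by fun_prop) : Continuous fun s => u (x', y, s)) 0 ζ')
          intervalIntegrable_const, intervalIntegral.integral_const, smul_eq_mul, sub_zero]
    rw [hfun]
    have hmean : HasDerivAt (fun x' => depthMean u x' y) Mu x := paramDerivX uC1 y 0 1 x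
    exact (hasDerivAt_fst2 hC1 x y).mul ((paramDerivX uC1 y 0 ζ' x).sub (hmean.const_mul ζ'))
  have hB : ∀ ζ' : ℝ,
      HasDerivAt (fun y' => h (x, y') * ∫ s in (0:ℝ)..ζ', (v (x, y', s) - depthMean v x y'))
        (dh2 * ((∫ s in (0:ℝ)..ζ', v (x, y, s)) - ζ' * vm)
          + h (x, y) * ((∫ s in (0:ℝ)..ζ', dv2 s) - ζ' * Mv)) y := by
    intro ζ'
    have hfun : (fun y' => h (x, y') * ∫ s in (0:ℝ)..ζ', (v (x, y', s) - depthMean v x y'))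
        = fun y' => h (x, y') * ((∫ s in (0:ℝ)..ζ', v (x, y', s)) - ζ' * depthMean v x y') := by
      funext y'
      rw [intervalIntegral.integral_sub
          (Continuous.intervalIntegrable (by exact vC1.continuous.comp (by fun_prop) : Continuous fun s => v (x, y', s)) 0 ζ')
          intervalIntegrable_const, intervalIntegral.integral_const, smul_eq_mul, sub_zero]
    rw [hfun]
    have hmean : HasDerivAt (fun y' => depthMean v x y') Mv y := paramDerivY vC1 x 0 1 y
    exact (hasDerivAt_snd2 hC1 x y).mul ((paramDerivY vC1 x 0 ζ' y).sub (hmean.const_mul ζ'))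
  -- rewrite hOmega as explicit function of ζ'
  have hg : (fun ζ' => hOmega h u v x y ζ')
      = fun ζ' => -(dh1 * ((∫ s in (0:ℝ)..ζ', u (x, y, s)) - ζ' * um)
          + h (x, y) * ((∫ s in (0:ℝ)..ζ', du1 s) - ζ' * Mu))
        - (dh2 * ((∫ s in (0:ℝ)..ζ', v (x, y, s)) - ζ' * vm)
          + h (x, y) * ((∫ s in (0:ℝ)..ζ', dv2 s) - ζ' * Mv)) := by
    funext ζ'
    rw [hOmega, (hA ζ').deriv, (hB ζ').deriv]
  -- ζ-derivative of hOmega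
  have hg' : HasDerivAt (fun ζ' => hOmega h u v x y ζ')
      (-(dh1 * (u (x, y, ζ) - 1 * um) + h (x, y) * (du1 ζ - 1 * Mu))
        - (dh2 * (v (x, y, ζ) - 1 * vm) + h (x, y) * (dv2 ζ - 1 * Mv))) ζ := by
    rw [hg]
    exact ((((ftc_right cu ζ).sub ((hasDerivAt_id ζ).mul_const um)).const_mul dh1).add
        (((ftc_right cdu ζ).sub ((hasDerivAt_id ζ).mul_const Mu)).const_mul (h (x, y)))).neg.sub
      ((((ftc_right cv ζ).sub ((hasDerivAt_id ζ).mul_const vm)).const_mul dh2).add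
        (((ftc_right cdv ζ).sub ((hasDerivAt_id ζ).mul_const Mv)).const_mul (h (x, y))))
  have d1 : deriv (fun x' => h (x', y) * u (x', y, ζ)) x = dh1 * u (x, y, ζ) + h (x, y) * du1 ζ :=
    ((hasDerivAt_fst2 hC1 x y).mul (hasDerivAt_fst3 uC1 x y ζ)).deriv
  have d2 : deriv (fun y' => h (x, y') * v (x, y', ζ)) y = dh2 * v (x, y, ζ) + h (x, y) * dv2 ζ :=
    ((hasDerivAt_snd2 hC1 x y).mul (hasDerivAt_snd3 vC1 x y ζ)).deriv
  have d3 : deriv (fun x' => h (x', y) * depthMean u x' y) x = dh1 * um + h (x, y) * Mu :=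
    ((hasDerivAt_fst2 hC1 x y).mul (paramDerivX uC1 y 0 1 x)).deriv
  have d4 : deriv (fun y' => h (x, y') * depthMean v x y') y = dh2 * vm + h (x, y) * Mv :=
    ((hasDerivAt_snd2 hC1 x y).mul (paramDerivY vC1 x 0 1 y)).deriv
  rw [d1, d2, d3, d4, hg'.deriv]
  ring
end

section
/- Let M ≥ 1 be a natural number, let h : ℝ² → ℝ be continuously differentiable with h > 0, and let u_m, v_m, α₁,…,α_M, β₁,…,β_M : ℝ² → ℝ be continuously differentiable. Define u(x,y,ζ) = u_m(x,y) + Σ_{ℓ=1}^M α_ℓ(x,y)·φ_ℓ(ζ) and v(x,y,ζ) = v_m(x,y) + Σ_{ℓ=1}^M β_ℓ(x,y)·φ_ℓ(ζ); define hω(x,y,ζ) = −∂_x[ h·Σ_{ℓ=1}^M α_ℓ·∫₀^ζ φ_ℓ(s) ds ] − ∂_y[ h·Σ_{ℓ=1}^M β_ℓ·∫₀^ζ φ_ℓ(s) ds ]; define D_ℓ = ∂_x(h α_ℓ) + ∂_y(h β_ℓ) and B_{iℓn} = (2i+1)·∫₀¹ φ_i′(ζ)·( ∫₀^ζ φ_ℓ(s)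 ds )·φ_n(ζ) dζ. Then for every 1 ≤ i ≤ M and all (x,y): ∫₀¹ φ_i(ζ)·∂_ζ[ u·(hω) ](x,y,ζ) dζ = −(1/(2i+1))·( u_m·D_i − Σ_{ℓ=1}^M Σ_{n=1}^M B_{iℓn}·α_n·D_ℓ ). -/
open intervalIntegral

/-- The shifted Legendre polynomial on `[0,1]`, normalized so that
`φ_ℓ(0) = 1`, given by the Rodrigues formula
`φ_ℓ(ζ) = ((−1)^ℓ/ℓ!)·(d/dζ)^ℓ[(ζ²−ζ)^ℓ]`. -/
noncomputable def legendreShifted (n : ℕ) : ℝ → ℝ := fun ζ =>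
  ((-1 : ℝ) ^ n / (Nat.factorial n : ℝ)) *
    iteratedDeriv n (fun z : ℝ => (z ^ 2 - z) ^ n) ζ

/-- The polynomial expansion `u(x,y,ζ) = u_m(x,y) + Σ_{ℓ=1}^M α_ℓ(x,y)·φ_ℓ(ζ)`. -/
noncomputable def momentExpansion (M : ℕ) (um : ℝ × ℝ → ℝ)
    (α : ℕ → ℝ × ℝ → ℝ) (x y ζ : ℝ) : ℝ :=
  um (x, y) + ∑ ℓ ∈ Finset.Icc 1 M, α ℓ (x, y) * legendreShifted ℓ ζ

/-- The velocity vertical coupling operator `hω` evaluated on the polynomial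
expansion:
`hω(x,y,ζ) = −∂_x[h·Σ_{ℓ=1}^M α_ℓ·∫₀^ζ φ_ℓ ds] − ∂_y[h·Σ_{ℓ=1}^M β_ℓ·∫₀^ζ φ_ℓ ds]`. -/
noncomputable def hOmegaExp (M : ℕ) (h : ℝ × ℝ → ℝ)
    (α β : ℕ → ℝ × ℝ → ℝ) (x y ζ : ℝ) : ℝ :=
  - deriv (fun x' =>
      h (x', y) *
        ∑ ℓ ∈ Finset.Icc 1 M,
          α ℓ (x', y) * ∫ s in (0 : ℝ)..ζ, legendreShifted ℓ s) x
  - deriv (fun y' =>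
      h (x, y') *
        ∑ ℓ ∈ Finset.Icc 1 M,
          β ℓ (x, y') * ∫ s in (0 : ℝ)..ζ, legendreShifted ℓ s) y

/-- `D_ℓ = ∂_x(h α_ℓ) + ∂_y(h β_ℓ)`. -/
noncomputable def Dcoef (h : ℝ × ℝ → ℝ) (α β : ℕ → ℝ × ℝ → ℝ)
    (ℓ : ℕ) (x y : ℝ) : ℝ :=
  deriv (fun x' => h (x', y) * α ℓ (x', y)) x
    + deriv (fun y' => h (x, y') * β ℓ (x, y')) y

/-- `B_{iℓn} = (2i+1)·∫₀¹ φ_i′(ζ)·(∫₀^ζ φ_ℓ ds)·φ_n(ζ) dζ`. -/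
noncomputable def Bcoef (i ℓ n : ℕ) : ℝ :=
  (2 * (i : ℝ) + 1) *
    ∫ ζ in (0 : ℝ)..1,
      deriv (legendreShifted i) ζ *
        (∫ s in (0 : ℝ)..ζ, legendreShifted ℓ s) * legendreShifted n ζ

open Polynomial MeasureTheory


noncomputable def Ppoly (n : ℕ) : Polynomial ℝ := (X ^ 2 - X) ^ n

lemma Ppoly_monic (n : ℕ) : (Ppoly n).Monic := by
  have h : (X ^ 2 - X : ℝ[X]).Monic := by
    have := Polynomial.monic_X_pow_sub (R := ℝ) (p := X) (n := 2)
      (by simpa using (Polynomial.degree_X_le).trans_lt (by norm_num))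
    simpa using this
  exact h.pow n

lemma Ppoly_natDegree (n : ℕ) : (Ppoly n).natDegree = 2 * n := by
  have h : (X ^ 2 - X : ℝ[X]).natDegree = 2 := by compute_degree!
  rw [Ppoly, Polynomial.natDegree_pow, h, Nat.mul_comm]

lemma eval_iterate_derivative_Ppoly {n j : ℕ} (hj : j < n) (t : ℝ)
    (ht : t = 0 ∨ t = 1) : ((derivative)^[j] (Ppoly n)).eval t = 0 := by
  have hdvd : (X - C t) ^ n ∣ Ppoly n := by
    have h12 : (X ^ 2 - X : ℝ[X]) = (X - C 0) * (X - C 1) := by simp; ring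
    rw [Ppoly, h12, mul_pow]
    rcases ht with rfl | rfl
    · exact Dvd.dvd.mul_right dvd_rfl _
    · exact Dvd.dvd.mul_left dvd_rfl _
  obtain ⟨q, hq⟩ := Polynomial.pow_sub_dvd_iterate_derivative_of_pow_dvd j hdvd
  rw [hq, eval_mul, eval_pow, eval_sub, eval_X, eval_C, sub_self,
    zero_pow (Nat.sub_ne_zero_of_lt hj), zero_mul]

lemma poly_ibp (p q : ℝ[X]) :
    ∫ x in (0:ℝ)..1, (derivative p).eval x * q.eval x
      = p.eval 1 * q.eval 1 - p.eval 0 * q.eval 0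
        - ∫ x in (0:ℝ)..1, p.eval x * (derivative q).eval x := by
  have h := intervalIntegral.integral_mul_deriv_eq_deriv_mul
    (u := fun x => q.eval x) (v := fun x => p.eval x)
    (u' := fun x => (derivative q).eval x) (v' := fun x => (derivative p).eval x)
    (fun x _ => by simpa using q.hasDerivAt x)
    (fun x _ => by simpa using p.hasDerivAt x)
    ((derivative q).continuous.intervalIntegrable 0 1)
    ((derivative p).continuous.intervalIntegrable 0 1)
  have h1 : ∀ x : ℝ, q.eval x * (derivative p).eval x
      = (derivative p).eval x * q.eval x := fun x => mul_comm _ _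
  have h2 : ∀ x : ℝ, (derivative q).eval x * p.eval x
      = p.eval x * (derivative q).eval x := fun x => mul_comm _ _
  simp only [h1, h2] at h
  rw [h]; ring

/-- repeated integration by parts shift -/
lemma poly_shift (n : ℕ) : ∀ k ≤ n, ∀ q : ℝ[X],
    ∫ x in (0:ℝ)..1, ((derivative)^[n] (Ppoly n)).eval x * q.eval x
      = (-1:ℝ)^k * ∫ x in (0:ℝ)..1,
          ((derivative)^[n-k] (Ppoly n)).eval x * ((derivative)^[k] q).eval x := by
  intro k
  induction k with
  | zero => intro _ q; simp
  | succ k ih =>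
    intro hk q
    rw [ih (Nat.le_of_succ_le hk) q]
    have hs : n - k = (n - (k+1)) + 1 := by omega
    have hd : (derivative)^[n-k] (Ppoly n)
        = derivative ((derivative)^[n-(k+1)] (Ppoly n)) := by
      rw [hs, Function.iterate_succ_apply']
    rw [hd, poly_ibp]
    rw [eval_iterate_derivative_Ppoly (by omega) 1 (Or.inr rfl),
        eval_iterate_derivative_Ppoly (by omega) 0 (Or.inl rfl)]
    rw [← Function.iterate_succ_apply' derivative k q]
    ring

lemma Kval : ∀ n m : ℕ, ∫ x in (0:ℝ)..1, x ^ m * (x - 1) ^ n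
    = (-1:ℝ)^n * (Nat.factorial m * Nat.factorial n) / Nat.factorial (m+n+1) := by
  intro n
  induction n with
  | zero =>
    intro m
    simp only [pow_zero, mul_one, Nat.factorial]
    rw [integral_pow]
    have h1 : ((m:ℝ)+1) ≠ 0 := by positivity
    have h2 : (m.factorial : ℝ) ≠ 0 := by exact_mod_cast Nat.factorial_ne_zero _
    rw [Nat.succ_eq_add_one]
    push_cast
    rw [one_pow, zero_pow (Nat.succ_ne_zero m)]
    field_simp
    norm_num
  | succ n ih =>
    intro m
    -- (m+1) * K m (n+1) = -(n+1) * K (m+1) n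
    have h := intervalIntegral.integral_mul_deriv_eq_deriv_mul
      (u := fun x : ℝ => (x-1) ^ (n+1)) (v := fun x : ℝ => x ^ (m+1))
      (u' := fun x : ℝ => ((n:ℝ)+1) * (x-1) ^ n) (v' := fun x : ℝ => ((m:ℝ)+1) * x ^ m)
      (a := 0) (b := 1)
      (fun x _ => by
        have := ((hasDerivAt_id x).sub_const 1).fun_pow (n+1)
        simpa [Nat.add_sub_cancel, mul_comm] using this)
      (fun x _ => by
        have := (hasDerivAt_id x).fun_pow (m+1)
        simpa [Nat.add_sub_cancel, mul_comm] using this)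
      ((Continuous.intervalIntegrable (by continuity) 0 1))
      ((Continuous.intervalIntegrable (by continuity) 0 1))
    simp only [one_pow, sub_self, zero_pow, Nat.succ_ne_zero, ne_eq, not_false_iff] at h
    -- h : ∫ (x-1)^(n+1) * ((m+1) x^m) = 1^(m+1)*0... compute
    have h2 : ∫ x in (0:ℝ)..1, x ^ m * (x-1)^(n+1)
        = -(((n:ℝ)+1)/((m:ℝ)+1)) * ∫ x in (0:ℝ)..1, x^(m+1) * (x-1)^n := by
      have hm : ((m:ℝ)+1) ≠ 0 := by positivity
      have e1 : (∫ x in (0:ℝ)..1, (x-1)^(n+1) * (((m:ℝ)+1) * x ^ m))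
          = ((m:ℝ)+1) * ∫ x in (0:ℝ)..1, x ^ m * (x-1)^(n+1) := by
        rw [← intervalIntegral.integral_const_mul]
        congr 1; funext x; ring
      have e2 : (∫ x in (0:ℝ)..1, ((n:ℝ)+1) * (x-1)^n * x ^ (m+1))
          = ((n:ℝ)+1) * ∫ x in (0:ℝ)..1, x ^ (m+1) * (x-1)^n := by
        rw [← intervalIntegral.integral_const_mul]
        congr 1; funext x; ring
      rw [e1, e2] at h
      field_simp at h ⊢
      linarith [h]
    rw [h2, ih (m+1)]
    have hm : ((m:ℝ)+1) ≠ 0 := by positivity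
    have hfm : (Nat.factorial (m+1) : ℝ) = (m+1) * Nat.factorial m := by
      rw [Nat.factorial_succ]; push_cast; ring
    have hfn : (Nat.factorial (n+1) : ℝ) = (n+1) * Nat.factorial n := by
      rw [Nat.factorial_succ]; push_cast; ring
    have harr : m + 1 + n + 1 = m + (n+1) + 1 := by omega
    rw [harr] at *
    rw [hfm, hfn, pow_succ]
    have hf : (Nat.factorial (m + (n+1) + 1) : ℝ) ≠ 0 := by
      exact_mod_cast Nat.factorial_ne_zero _
    field_simp

lemma integral_Ppoly (n : ℕ) : ∫ x in (0:ℝ)..1, (Ppoly n).eval x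
    = (-1:ℝ)^n * (Nat.factorial n * Nat.factorial n) / Nat.factorial (2*n+1) := by
  have he : ∀ x : ℝ, (Ppoly n).eval x = x ^ n * (x - 1) ^ n := by
    intro x; rw [Ppoly]; simp [← mul_pow]; ring_nf
  simp only [he]
  rw [Kval n n]
  have : n + n + 1 = 2*n+1 := by omega
  rw [this]

lemma iterate_derivative_Ppoly_2n (n : ℕ) :
    (derivative)^[2*n] (Ppoly n) = C ((Nat.factorial (2*n) : ℝ)) := by
  have hdeg : ((derivative)^[2*n] (Ppoly n)).natDegree ≤ 0 := by
    have := Polynomial.natDegree_iterate_derivative (Ppoly n) (2*n)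
    rw [Ppoly_natDegree] at this; omega
  rw [Polynomial.eq_C_of_natDegree_le_zero hdeg]
  congr 1
  rw [Polynomial.coeff_iterate_derivative, Nat.zero_add]
  have hlead' : (Ppoly n).coeff (2*n) = 1 := by
    have := (Ppoly_monic n).leadingCoeff
    rwa [Polynomial.leadingCoeff, Ppoly_natDegree] at this
  rw [hlead', Nat.descFactorial_self]
  simp

lemma diag_integral (n : ℕ) :
    ∫ x in (0:ℝ)..1, ((derivative)^[n] (Ppoly n)).eval x
        * ((derivative)^[n] (Ppoly n)).eval x
      = ((Nat.factorial n : ℝ))^2 / (2*(n:ℝ)+1) := by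
  rw [poly_shift n n le_rfl]
  have h2n : (derivative)^[n] ((derivative)^[n] (Ppoly n)) = C ((Nat.factorial (2*n) : ℝ)) := by
    rw [← Function.iterate_add_apply, ← iterate_derivative_Ppoly_2n n]
    congr 1; omega
  rw [h2n]
  simp only [Nat.sub_self, Function.iterate_zero_apply, eval_C]
  rw [intervalIntegral.integral_mul_const, integral_Ppoly]
  have hf : (Nat.factorial (2*n+1) : ℝ) = (2*(n:ℝ)+1) * Nat.factorial (2*n) := by
    rw [Nat.factorial_succ]; push_cast; ring
  have h1 : (Nat.factorial (2*n) : ℝ) ≠ 0 := by exact_mod_cast Nat.factorial_ne_zero _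
  have h2 : (2*(n:ℝ)+1) ≠ 0 := by positivity
  rw [hf]
  field_simp
  have hone : (-1:ℝ)^n * (-1:ℝ)^n = 1 := by
    rw [← pow_add, ← two_mul, pow_mul]; norm_num
  rw [sq, hone]


noncomputable def Lpoly (n : ℕ) : Polynomial ℝ :=
  C ((-1:ℝ)^n / (Nat.factorial n : ℝ)) * (derivative)^[n] (Ppoly n)

lemma iteratedDeriv_eval (p : ℝ[X]) : ∀ n : ℕ, ∀ ζ : ℝ,
    iteratedDeriv n (fun z => p.eval z) ζ = ((derivative)^[n] p).eval ζ := by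
  intro n
  induction n with
  | zero => intro ζ; simp
  | succ n ih =>
    intro ζ
    rw [iteratedDeriv_succ]
    have hfun : iteratedDeriv n (fun z => p.eval z)
        = fun z => ((derivative)^[n] p).eval z := funext ih
    rw [hfun, Function.iterate_succ_apply']
    exact Polynomial.deriv _

lemma legendreShifted_eq_eval (n : ℕ) :
    legendreShifted n = fun ζ => (Lpoly n).eval ζ := by
  funext ζ
  have hfun : (fun z : ℝ => (z ^ 2 - z) ^ n) = fun z => (Ppoly n).eval z := by
    funext z; simp [Ppoly]
  rw [legendreShifted, hfun, iteratedDeriv_eval, Lpoly, eval_mul, eval_C]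

lemma legendre_hasDerivAt (n : ℕ) (ζ : ℝ) :
    HasDerivAt (legendreShifted n) ((derivative (Lpoly n)).eval ζ) ζ := by
  rw [legendreShifted_eq_eval]
  exact (Lpoly n).hasDerivAt ζ

lemma deriv_legendreShifted (n : ℕ) :
    deriv (legendreShifted n) = fun ζ => (derivative (Lpoly n)).eval ζ :=
  funext fun ζ => (legendre_hasDerivAt n ζ).deriv

lemma legendre_continuous (n : ℕ) : Continuous (legendreShifted n) := by
  rw [legendreShifted_eq_eval]; exact (Lpoly n).continuous

lemma natDegree_Lpoly_le (m : ℕ) : (Lpoly m).natDegree ≤ m := by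
  refine (Polynomial.natDegree_mul_le).trans ?_
  have h1 := Polynomial.natDegree_iterate_derivative (Ppoly m) m
  rw [Ppoly_natDegree] at h1
  simp only [Polynomial.natDegree_C]
  omega

lemma ortho_poly {n : ℕ} (q : ℝ[X]) (hq : q.natDegree < n) :
    ∫ x in (0:ℝ)..1, ((derivative)^[n] (Ppoly n)).eval x * q.eval x = 0 := by
  rw [poly_shift n n le_rfl q, Polynomial.iterate_derivative_eq_zero hq]
  simp

lemma legendre_ortho_lt {m n : ℕ} (h : m < n) :
    ∫ x in (0:ℝ)..1, legendreShifted n x * legendreShifted m x = 0 := by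
  simp only [legendreShifted_eq_eval, Lpoly, eval_mul, eval_C]
  have he : ∀ x : ℝ, ((-1:ℝ)^n / n.factorial) * ((derivative)^[n] (Ppoly n)).eval x
        * (((-1:ℝ)^m / m.factorial) * ((derivative)^[m] (Ppoly m)).eval x)
      = ((-1:ℝ)^n / n.factorial)
        * (((derivative)^[n] (Ppoly n)).eval x * (Lpoly m).eval x) := by
    intro x; rw [Lpoly, eval_mul, eval_C]; ring
  simp only [he]
  rw [intervalIntegral.integral_const_mul,
    ortho_poly (Lpoly m) (lt_of_le_of_lt (natDegree_Lpoly_le m) h), mul_zero]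

lemma legendre_ortho {m n : ℕ} (h : m ≠ n) :
    ∫ x in (0:ℝ)..1, legendreShifted n x * legendreShifted m x = 0 := by
  rcases Nat.lt_or_ge m n with hmn | hmn
  · exact legendre_ortho_lt hmn
  · have hnm : n < m := lt_of_le_of_ne hmn (Ne.symm h)
    have := legendre_ortho_lt hnm
    have hc : ∀ x : ℝ, legendreShifted n x * legendreShifted m x
        = legendreShifted m x * legendreShifted n x := fun x => mul_comm _ _
    simp only [hc]
    exact this

lemma legendre_self (n : ℕ) :
    ∫ x in (0:ℝ)..1, legendreShifted n x * legendreShifted n x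
      = 1 / (2*(n:ℝ)+1) := by
  simp only [legendreShifted_eq_eval, Lpoly, eval_mul, eval_C]
  have he : ∀ x : ℝ, ((-1:ℝ)^n / n.factorial) * ((derivative)^[n] (Ppoly n)).eval x
        * (((-1:ℝ)^n / n.factorial) * ((derivative)^[n] (Ppoly n)).eval x)
      = (((-1:ℝ)^n / n.factorial) * ((-1:ℝ)^n / n.factorial))
        * (((derivative)^[n] (Ppoly n)).eval x * ((derivative)^[n] (Ppoly n)).eval x) := by
    intro x; ring
  simp only [he]
  rw [intervalIntegral.integral_const_mul, diag_integral]
  have h1 : ((-1:ℝ)^n / n.factorial) * ((-1:ℝ)^n / n.factorial)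
      = 1 / ((n.factorial:ℝ))^2 := by
    have hone : (-1:ℝ)^n * (-1:ℝ)^n = 1 := by
      rw [← pow_add, ← two_mul, pow_mul]; norm_num
    rw [div_mul_div_comm, hone, sq]
  rw [h1]
  have hf : ((n.factorial:ℝ))^2 ≠ 0 := by
    have : (n.factorial:ℝ) ≠ 0 := by exact_mod_cast Nat.factorial_ne_zero _
    positivity
  have h2 : (2*(n:ℝ)+1) ≠ 0 := by positivity
  field_simp

lemma legendreShifted_zero_fun : legendreShifted 0 = fun _ => (1:ℝ) := by
  funext ζ; simp [legendreShifted]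

lemma integral_legendre_eq_zero {ℓ : ℕ} (hℓ : 1 ≤ ℓ) :
    ∫ x in (0:ℝ)..1, legendreShifted ℓ x = 0 := by
  have := legendre_ortho (m := 0) (n := ℓ) (by omega)
  rw [legendreShifted_zero_fun] at this
  simpa using this

noncomputable def PhiL (ℓ : ℕ) (ζ : ℝ) : ℝ := ∫ s in (0:ℝ)..ζ, legendreShifted ℓ s

lemma PhiL_hasDerivAt (ℓ : ℕ) (ζ : ℝ) :
    HasDerivAt (PhiL ℓ) (legendreShifted ℓ ζ) ζ := by
  exact intervalIntegral.integral_hasDerivAt_right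
    ((legendre_continuous ℓ).intervalIntegrable 0 ζ)
    ((legendre_continuous ℓ).stronglyMeasurableAtFilter _ _)
    (legendre_continuous ℓ).continuousAt

lemma PhiL_continuous (ℓ : ℕ) : Continuous (PhiL ℓ) := by
  have : Differentiable ℝ (PhiL ℓ) := fun ζ => (PhiL_hasDerivAt ℓ ζ).differentiableAt
  exact this.continuous

lemma PhiL_zero (ℓ : ℕ) : PhiL ℓ 0 = 0 := intervalIntegral.integral_same

lemma PhiL_one {ℓ : ℕ} (hℓ : 1 ≤ ℓ) : PhiL ℓ 1 = 0 := integral_legendre_eq_zero hℓ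

lemma intA {i ℓ : ℕ} (hℓ : 1 ≤ ℓ) :
    ∫ ζ in (0:ℝ)..1, (derivative (Lpoly i)).eval ζ * PhiL ℓ ζ
      = if ℓ = i then -(1/(2*(i:ℝ)+1)) else 0 := by
  have h := intervalIntegral.integral_mul_deriv_eq_deriv_mul
    (u := PhiL ℓ) (u' := legendreShifted ℓ)
    (v := legendreShifted i) (v' := fun ζ => (derivative (Lpoly i)).eval ζ)
    (a := 0) (b := 1)
    (fun ζ _ => PhiL_hasDerivAt ℓ ζ)
    (fun ζ _ => legendre_hasDerivAt i ζ)
    ((legendre_continuous ℓ).intervalIntegrable 0 1)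
    (((Lpoly i).derivative.continuous).intervalIntegrable 0 1)
  rw [PhiL_one hℓ, PhiL_zero] at h
  have hc : ∀ ζ : ℝ, PhiL ℓ ζ * (derivative (Lpoly i)).eval ζ
      = (derivative (Lpoly i)).eval ζ * PhiL ℓ ζ := fun ζ => mul_comm _ _
  simp only [hc] at h
  rw [h]
  by_cases hli : ℓ = i
  · subst hli
    rw [legendre_self ℓ]
    norm_num
  · rw [legendre_ortho (by exact fun hc' => hli hc'.symm : ¬ i = ℓ)]
    simp [hli]


lemma Bcoef_eq (i ℓ n : ℕ) : Bcoef i ℓ n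
    = (2 * (i : ℝ) + 1) * ∫ ζ in (0:ℝ)..1,
        (derivative (Lpoly i)).eval ζ * PhiL ℓ ζ * legendreShifted n ζ := by
  rw [Bcoef, deriv_legendreShifted]
  rfl

lemma main_core (M i : ℕ) (hi1 : 1 ≤ i) (hiM : i ≤ M) (c0 : ℝ) (a d : ℕ → ℝ) :
    (∫ ζ in (0:ℝ)..1, legendreShifted i ζ *
        deriv (fun ζ' => (c0 + ∑ n ∈ Finset.Icc 1 M, a n * legendreShifted n ζ')
            * (-(∑ ℓ ∈ Finset.Icc 1 M, d ℓ * PhiL ℓ ζ'))) ζ)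
      = -(1/(2*(i:ℝ)+1)) * (c0 * d i
          - ∑ ℓ ∈ Finset.Icc 1 M, ∑ n ∈ Finset.Icc 1 M,
              Bcoef i ℓ n * a n * d ℓ) := by
  set U : ℝ → ℝ := fun ζ => c0 + ∑ n ∈ Finset.Icc 1 M, a n * legendreShifted n ζ
    with hUdef
  set W : ℝ → ℝ := fun ζ => -(∑ ℓ ∈ Finset.Icc 1 M, d ℓ * PhiL ℓ ζ) with hWdef
  set U' : ℝ → ℝ := fun ζ => ∑ n ∈ Finset.Icc 1 M, a n * (derivative (Lpoly n)).eval ζ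
    with hU'def
  set W' : ℝ → ℝ := fun ζ => -(∑ ℓ ∈ Finset.Icc 1 M, d ℓ * legendreShifted ℓ ζ)
    with hW'def
  have hUd : ∀ ζ, HasDerivAt U (U' ζ) ζ := fun ζ =>
    (HasDerivAt.fun_sum fun n _ =>
      (legendre_hasDerivAt n ζ).const_mul (a n)).const_add c0
  have hWd : ∀ ζ, HasDerivAt W (W' ζ) ζ := fun ζ =>
    (HasDerivAt.fun_sum fun ℓ _ => (PhiL_hasDerivAt ℓ ζ).const_mul (d ℓ)).neg
  have hUWd : ∀ ζ, HasDerivAt (fun t => U t * W t) (U' ζ * W ζ + U ζ * W' ζ) ζ :=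
    fun ζ => (hUd ζ).mul (hWd ζ)
  have hUc : Continuous U := continuous_const.add
    (continuous_finset_sum _ fun n _ => continuous_const.mul (legendre_continuous n))
  have hWc : Continuous W :=
    (continuous_finset_sum _ fun ℓ _ => continuous_const.mul (PhiL_continuous ℓ)).neg
  have hU'c : Continuous U' :=
    continuous_finset_sum _ fun n _ => continuous_const.mul ((Lpoly n).derivative.continuous)
  have hW'c : Continuous W' :=
    (continuous_finset_sum _ fun ℓ _ => continuous_const.mul (legendre_continuous ℓ)).neg
  -- rewrite the deriv in the integrand
  have hdx : ∀ ζ : ℝ, deriv (fun t => U t * W t) ζ = U' ζ * W ζ + U ζ * W' ζ :=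
    fun ζ => (hUWd ζ).deriv
  show (∫ ζ in (0:ℝ)..1, legendreShifted i ζ * deriv (fun t => U t * W t) ζ) = _
  simp only [hdx]
  -- integration by parts
  have hibp := intervalIntegral.integral_mul_deriv_eq_deriv_mul
    (u := legendreShifted i) (u' := fun ζ => (derivative (Lpoly i)).eval ζ)
    (v := fun t => U t * W t) (v' := fun ζ => U' ζ * W ζ + U ζ * W' ζ)
    (a := 0) (b := 1)
    (fun ζ _ => legendre_hasDerivAt i ζ) (fun ζ _ => hUWd ζ)
    (((Lpoly i).derivative.continuous).intervalIntegrable 0 1)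
    (((hU'c.mul hWc).add (hUc.mul hW'c)).intervalIntegrable 0 1)
  have hW1 : W 1 = 0 := by
    rw [hWdef]
    simp only [neg_eq_zero]
    refine Finset.sum_eq_zero fun ℓ hℓ => ?_
    rw [PhiL_one (Finset.mem_Icc.mp hℓ).1, mul_zero]
  have hW0 : W 0 = 0 := by
    rw [hWdef]
    simp only [neg_eq_zero]
    refine Finset.sum_eq_zero fun ℓ _ => ?_
    rw [PhiL_zero, mul_zero]
  rw [hibp]
  simp only [hW1, hW0, mul_zero, sub_zero, zero_sub]
  -- expand the integrand pointwise into a double sum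
  have key : ∀ ζ : ℝ, (Lpoly i).derivative.eval ζ * (U ζ * W ζ)
      = ∑ ℓ ∈ Finset.Icc 1 M,
          -((d ℓ * c0) * ((Lpoly i).derivative.eval ζ * PhiL ℓ ζ)
            + ∑ n ∈ Finset.Icc 1 M,
                (d ℓ * a n) * ((Lpoly i).derivative.eval ζ * PhiL ℓ ζ * legendreShifted n ζ)) := by
    intro ζ
    rw [hUdef, hWdef]
    simp only [mul_neg, neg_mul, ← Finset.sum_neg_distrib]
    rw [Finset.mul_sum, Finset.mul_sum]
    refine Finset.sum_congr rfl fun ℓ _ => ?_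
    have hstep : (Lpoly i).derivative.eval ζ *
          ((c0 + ∑ n ∈ Finset.Icc 1 M, a n * legendreShifted n ζ) * -(d ℓ * PhiL ℓ ζ))
        = -(d ℓ * c0 * ((Lpoly i).derivative.eval ζ * PhiL ℓ ζ)
            + ∑ n ∈ Finset.Icc 1 M,
                ((Lpoly i).derivative.eval ζ * PhiL ℓ ζ * d ℓ) * (a n * legendreShifted n ζ)) := by
      rw [← Finset.mul_sum]
      ring
    rw [hstep, neg_inj]
    congr 1
    exact Finset.sum_congr rfl fun n _ => by ring
  -- integrate term by term
  have hEc : Continuous fun ζ : ℝ => (Lpoly i).derivative.eval ζ := (Lpoly i).derivative.continuous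
  have hA : ∀ ℓ : ℕ, Continuous fun ζ : ℝ => (Lpoly i).derivative.eval ζ * PhiL ℓ ζ :=
    fun ℓ => hEc.mul (PhiL_continuous ℓ)
  have hB : ∀ ℓ n : ℕ, Continuous fun ζ : ℝ =>
      (Lpoly i).derivative.eval ζ * PhiL ℓ ζ * legendreShifted n ζ :=
    fun ℓ n => (hA ℓ).mul (legendre_continuous n)
  simp only [key]
  rw [intervalIntegral.integral_finset_sum (fun ℓ _ =>
    (((continuous_const.fun_mul (hA ℓ)).fun_add
      (continuous_finset_sum _ fun n _ => continuous_const.fun_mul (hB ℓ n))).fun_neg).intervalIntegrable 0 1)]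
  have heach : ∀ ℓ ∈ Finset.Icc 1 M,
      (∫ ζ in (0:ℝ)..1, -((d ℓ * c0) * ((Lpoly i).derivative.eval ζ * PhiL ℓ ζ)
          + ∑ n ∈ Finset.Icc 1 M,
              (d ℓ * a n) * ((Lpoly i).derivative.eval ζ * PhiL ℓ ζ * legendreShifted n ζ)))
      = -((d ℓ * c0) * (if ℓ = i then -(1/(2*(i:ℝ)+1)) else 0)
          + ∑ n ∈ Finset.Icc 1 M, (d ℓ * a n)
              * ∫ ζ in (0:ℝ)..1, (Lpoly i).derivative.eval ζ * PhiL ℓ ζ * legendreShifted n ζ) := by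
    intro ℓ hℓ
    rw [intervalIntegral.integral_neg, intervalIntegral.integral_add
      ((continuous_const.fun_mul (hA ℓ)).intervalIntegrable 0 1)
      ((continuous_finset_sum _ fun n _ => continuous_const.fun_mul (hB ℓ n)).intervalIntegrable 0 1),
      intervalIntegral.integral_const_mul,
      intervalIntegral.integral_finset_sum (fun n _ =>
        (continuous_const.fun_mul (hB ℓ n)).intervalIntegrable 0 1)]
    rw [intA (Finset.mem_Icc.mp hℓ).1]
    congr 1
    congr 1
    exact Finset.sum_congr rfl fun n _ => intervalIntegral.integral_const_mul _ _
  rw [Finset.sum_congr rfl heach]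
  -- final algebra
  have hq : (2*(i:ℝ)+1) ≠ 0 := by positivity
  simp only [neg_add_rev, Finset.sum_add_distrib, Finset.sum_neg_distrib]
  rw [Finset.sum_congr rfl (fun ℓ _ => by
    rw [mul_ite, mul_zero] :
    ∀ ℓ ∈ Finset.Icc 1 M, (d ℓ * c0) * (if ℓ = i then -(1/(2*(i:ℝ)+1)) else 0)
      = if ℓ = i then (d ℓ * c0) * -(1/(2*(i:ℝ)+1)) else 0)]
  rw [Finset.sum_ite_eq' (Finset.Icc 1 M) i (fun ℓ => (d ℓ * c0) * -(1/(2*(i:ℝ)+1)))]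
  rw [if_pos (Finset.mem_Icc.mpr ⟨hi1, hiM⟩)]
  have hBre : ∑ ℓ ∈ Finset.Icc 1 M, ∑ n ∈ Finset.Icc 1 M, Bcoef i ℓ n * a n * d ℓ
      = (2*(i:ℝ)+1) * ∑ ℓ ∈ Finset.Icc 1 M, ∑ n ∈ Finset.Icc 1 M,
          (d ℓ * a n) * ∫ ζ in (0:ℝ)..1,
            (Lpoly i).derivative.eval ζ * PhiL ℓ ζ * legendreShifted n ζ := by
    rw [Finset.mul_sum]
    refine Finset.sum_congr rfl fun ℓ _ => ?_
    rw [Finset.mul_sum]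
    refine Finset.sum_congr rfl fun n _ => ?_
    rw [Bcoef_eq]
    ring
  rw [hBre]
  field_simp
  ring




lemma hOmegaExp_eq (M : ℕ) (h : ℝ × ℝ → ℝ) (hC1 : ContDiff ℝ 1 h)
    (α β : ℕ → ℝ × ℝ → ℝ)
    (αC1 : ∀ ℓ : ℕ, ContDiff ℝ 1 (α ℓ)) (βC1 : ∀ ℓ : ℕ, ContDiff ℝ 1 (β ℓ))
    (x y ζ : ℝ) :
    hOmegaExp M h α β x y ζ
      = -(∑ ℓ ∈ Finset.Icc 1 M, Dcoef h α β ℓ x y * PhiL ℓ ζ) := by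
  have hxcurve : DifferentiableAt ℝ (fun x' : ℝ => (x', y)) x :=
    differentiableAt_fun_id.prodMk (differentiableAt_const y)
  have hycurve : DifferentiableAt ℝ (fun y' : ℝ => (x, y')) y :=
    (differentiableAt_const x).prodMk differentiableAt_fun_id
  have hhx : DifferentiableAt ℝ (fun x' => h (x', y)) x :=
    ((hC1.differentiable one_ne_zero) (x, y)).comp x hxcurve
  have hhy : DifferentiableAt ℝ (fun y' => h (x, y')) y :=
    ((hC1.differentiable one_ne_zero) (x, y)).comp y hycurve
  have hprodx : ∀ ℓ : ℕ, DifferentiableAt ℝ (fun x' => h (x', y) * α ℓ (x', y)) x :=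
    fun ℓ => hhx.mul ((((αC1 ℓ).differentiable one_ne_zero) (x, y)).comp x hxcurve)
  have hprody : ∀ ℓ : ℕ, DifferentiableAt ℝ (fun y' => h (x, y') * β ℓ (x, y')) y :=
    fun ℓ => hhy.mul ((((βC1 ℓ).differentiable one_ne_zero) (x, y)).comp y hycurve)
  have hdx : deriv (fun x' =>
        h (x', y) * ∑ ℓ ∈ Finset.Icc 1 M, α ℓ (x', y) * PhiL ℓ ζ) x
      = ∑ ℓ ∈ Finset.Icc 1 M,
          deriv (fun x' => h (x', y) * α ℓ (x', y)) x * PhiL ℓ ζ := by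
    have hfeq : (fun x' => h (x', y) * ∑ ℓ ∈ Finset.Icc 1 M, α ℓ (x', y) * PhiL ℓ ζ)
        = fun x' => ∑ ℓ ∈ Finset.Icc 1 M, (h (x', y) * α ℓ (x', y)) * PhiL ℓ ζ := by
      funext x'
      rw [Finset.mul_sum]
      exact Finset.sum_congr rfl fun ℓ _ => by ring
    rw [hfeq]
    exact (HasDerivAt.fun_sum fun ℓ _ =>
      ((hprodx ℓ).hasDerivAt).mul_const (PhiL ℓ ζ)).deriv
  have hdy : deriv (fun y' =>
        h (x, y') * ∑ ℓ ∈ Finset.Icc 1 M, β ℓ (x, y') * PhiL ℓ ζ) y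
      = ∑ ℓ ∈ Finset.Icc 1 M,
          deriv (fun y' => h (x, y') * β ℓ (x, y')) y * PhiL ℓ ζ := by
    have hfeq : (fun y' => h (x, y') * ∑ ℓ ∈ Finset.Icc 1 M, β ℓ (x, y') * PhiL ℓ ζ)
        = fun y' => ∑ ℓ ∈ Finset.Icc 1 M, (h (x, y') * β ℓ (x, y')) * PhiL ℓ ζ := by
      funext y'
      rw [Finset.mul_sum]
      exact Finset.sum_congr rfl fun ℓ _ => by ring
    rw [hfeq]
    exact (HasDerivAt.fun_sum fun ℓ _ =>
      ((hprody ℓ).hasDerivAt).mul_const (PhiL ℓ ζ)).deriv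
  show - deriv (fun x' => h (x', y) * ∑ ℓ ∈ Finset.Icc 1 M, α ℓ (x', y) * PhiL ℓ ζ) x
      - deriv (fun y' => h (x, y') * ∑ ℓ ∈ Finset.Icc 1 M, β ℓ (x, y') * PhiL ℓ ζ) y
    = -(∑ ℓ ∈ Finset.Icc 1 M, Dcoef h α β ℓ x y * PhiL ℓ ζ)
  rw [hdx, hdy, sub_eq_add_neg, ← neg_add, ← Finset.sum_add_distrib, neg_inj]
  refine Finset.sum_congr rfl fun ℓ _ => ?_
  rw [Dcoef, add_mul]


/-- The moment of the velocity vertical-coupling term of the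
shallow water moment equations: for every `1 ≤ i ≤ M`,
`∫₀¹ φ_i·∂_ζ[u·(hω)] dζ = −(1/(2i+1))·(u_m·D_i − Σ_{ℓ,n} B_{iℓn}·α_n·D_ℓ)`. -/
theorem moment_of_velocity_vertical_coupling
    (M : ℕ) (hM : 1 ≤ M)
    (h : ℝ × ℝ → ℝ) (hC1 : ContDiff ℝ 1 h) (hpos : ∀ p : ℝ × ℝ, 0 < h p)
    (um vm : ℝ × ℝ → ℝ) (umC1 : ContDiff ℝ 1 um) (vmC1 : ContDiff ℝ 1 vm)
    (α β : ℕ → ℝ × ℝ → ℝ)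
    (αC1 : ∀ ℓ : ℕ, ContDiff ℝ 1 (α ℓ)) (βC1 : ∀ ℓ : ℕ, ContDiff ℝ 1 (β ℓ)) :
    ∀ i : ℕ, 1 ≤ i → i ≤ M → ∀ x y : ℝ,
      (∫ ζ in (0 : ℝ)..1,
          legendreShifted i ζ *
            deriv (fun ζ' =>
              momentExpansion M um α x y ζ' * hOmegaExp M h α β x y ζ') ζ)
        = -(1 / (2 * (i : ℝ) + 1)) *
            (um (x, y) * Dcoef h α β i x y
              - ∑ ℓ ∈ Finset.Icc 1 M, ∑ n ∈ Finset.Icc 1 M,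
                  Bcoef i ℓ n * α n (x, y) * Dcoef h α β ℓ x y) := by
  intro i hi1 hiM x y
  have hrw : (fun ζ' => momentExpansion M um α x y ζ' * hOmegaExp M h α β x y ζ')
      = fun ζ' => (um (x, y) + ∑ n ∈ Finset.Icc 1 M,
            (fun n => α n (x, y)) n * legendreShifted n ζ')
          * (-(∑ ℓ ∈ Finset.Icc 1 M,
            (fun ℓ => Dcoef h α β ℓ x y) ℓ * PhiL ℓ ζ')) := by
    funext ζ'
    rw [momentExpansion, hOmegaExp_eq M h hC1 α β αC1 βC1 x y ζ']
  rw [hrw]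
  exact main_core M i hi1 hiM (um (x, y)) (fun n => α n (x, y))
    (fun ℓ => Dcoef h α β ℓ x y)
end
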